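/- arXiv:2601.02222 — 6 statements merged into one kernel-verified Lean document; each statement's English description precedes it below -/
import Mathlib

section
/- There exist constants L₀ ≥ 1 and C₁ > 0, depending only on d and the coefficients (v̂_k), such that for every integer L ≥ L₀, all α, θ ∈ ℝ, every λ ∈ ℝ, and every nonzero φ ∈ ℓ²(ℤ,ℂ) with ‖(L_{α,θ} − λ)φ‖ ≤ ‖φ‖/L, there exists j ∈ ℤ such that η_{j,L}φ ≠ 0 and ‖(L_{α,θ} − λ)(η_{j,L}φ)‖ ≤ (C₁^{1/2}/L)·‖η_{j,L}φ‖. -/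
open scoped BigOperators ENNReal

noncomputable def eta (j : ℤ) (L : ℕ) (n : ℤ) : ℝ :=
  if |n - j| ≤ (L : ℤ) then 1 - ((|n - j| : ℤ) : ℝ) / (L : ℝ) else 0

lemma eta_eq_max {L : ℕ} (hL : 1 ≤ L) (j n : ℤ) :
    eta j L n = max (1 - ((|n - j| : ℤ) : ℝ) / (L : ℝ)) 0 := by
  have hLpos : (0:ℝ) < L := by exact_mod_cast hL
  unfold eta
  split_ifs with h
  · rw [max_eq_left]
    have : ((|n - j| : ℤ) : ℝ) ≤ (L : ℝ) := by exact_mod_cast h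
    have := div_le_one_of_le₀ this hLpos.le
    linarith
  · rw [max_eq_right]
    push_neg at h
    have : (L : ℝ) < ((|n - j| : ℤ) : ℝ) := by exact_mod_cast h
    have : 1 < ((|n - j| : ℤ) : ℝ) / (L : ℝ) := (one_lt_div hLpos).mpr this
    linarith

lemma eta_nonneg {L : ℕ} (hL : 1 ≤ L) (j n : ℤ) : 0 ≤ eta j L n := by
  rw [eta_eq_max hL]; exact le_max_right _ _

lemma eta_le_one {L : ℕ} (hL : 1 ≤ L) (j n : ℤ) : eta j L n ≤ 1 := by
  have hLpos : (0:ℝ) < L := by exact_mod_cast hL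
  rw [eta_eq_max hL]
  have h0 : (0:ℝ) ≤ ((|n - j| : ℤ) : ℝ) := by exact_mod_cast abs_nonneg (n - j)
  have := div_nonneg h0 hLpos.le
  rw [max_le_iff]; constructor <;> linarith

lemma eta_zero {L : ℕ} {j n : ℤ} (h : (L : ℤ) < |n - j|) : eta j L n = 0 :=
  if_neg (not_le.mpr h)

lemma eta_lip {L : ℕ} (hL : 1 ≤ L) (j a b : ℤ) :
    |eta j L a - eta j L b| ≤ ((|a - b| : ℤ) : ℝ) / (L : ℝ) := by
  have hLpos : (0:ℝ) < L := by exact_mod_cast hL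
  rw [eta_eq_max hL, eta_eq_max hL]
  refine (abs_max_sub_max_le_abs _ _ _).trans ?_
  have h1 : (1 - ((|a - j| : ℤ) : ℝ) / (L : ℝ)) - (1 - ((|b - j| : ℤ) : ℝ) / (L : ℝ))
      = (((|b - j| : ℤ) : ℝ) - ((|a - j| : ℤ) : ℝ)) / (L : ℝ) := by ring
  rw [h1, abs_div, abs_of_pos hLpos]
  gcongr
  have hcast : |((|b - j| : ℤ) : ℝ) - ((|a - j| : ℤ) : ℝ)|
      = (((|(|b - j|) - (|a - j|)| : ℤ)) : ℝ) := by push_cast; rfl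
  rw [hcast]
  have h2 : |(|b - j|) - (|a - j|)| ≤ |a - b| := by
    rw [abs_sub_le_iff]
    constructor
    · have := abs_sub_abs_le_abs_sub (b - j) (a - j)
      have e1 : (b - j) - (a - j) = b - a := by ring
      rw [e1, abs_sub_comm b a] at this
      exact this
    · have := abs_sub_abs_le_abs_sub (a - j) (b - j)
      have e1 : (a - j) - (b - j) = a - b := by ring
      rwa [e1] at this
  exact_mod_cast h2

lemma energy_eq (x : lp (fun _ : ℤ => ℂ) 2) :
    ENNReal.ofReal (‖x‖^2) = ∑' n : ℤ, ENNReal.ofReal (‖(x : ∀ _ : ℤ, ℂ) n‖^2) := by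
  have h2 : (0:ℝ) < (2 : ℝ≥0∞).toReal := by norm_num
  have h := lp.norm_rpow_eq_tsum h2 x
  have hsum := (lp.memℓp x).summable h2
  have hpow : ∀ y : ℝ, y ^ (2:ℝ≥0∞).toReal = y ^ 2 := by
    intro y
    rw [show (2:ℝ≥0∞).toReal = ((2:ℕ):ℝ) by norm_num, Real.rpow_natCast]
  simp only [hpow] at h hsum
  rw [h, ENNReal.ofReal_tsum_of_nonneg (fun n => sq_nonneg _) hsum]

lemma mem_psi (L : ℕ) (j : ℤ) (g : ℤ → ℂ) (hg : ∀ n, (L:ℤ) < |n - j| → g n = 0) :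
    Memℓp g 2 := by
  apply memℓp_gen
  apply summable_of_ne_finset_zero (s := Finset.Icc (j - L) (j + L))
  intro n hn
  have : (L:ℤ) < |n - j| := by
    simp only [Finset.mem_Icc, not_and_or, not_le] at hn
    rw [lt_abs]
    rcases hn with h | h
    · right; omega
    · left; omega
  rw [hg n this]
  simp [Real.zero_rpow (by norm_num : (2:ℝ≥0∞).toReal ≠ 0)]

set_option maxHeartbeats 1000000 in
/-- Localization of approximate eigenfunctions: there exist `L₀ ≥ 1` and `C₁ > 0`,
depending only on `d` and the coefficients `v̂`, such that for every `L ≥ L₀`,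
all `α, θ, λ` and every nonzero `φ` with `‖(L_{α,θ}-λ)φ‖ ≤ ‖φ‖/L`, there is `j ∈ ℤ`
such that `η_{j,L}φ ≠ 0` and `‖(L_{α,θ}-λ)(η_{j,L}φ)‖ ≤ (C₁^{1/2}/L)‖η_{j,L}φ‖`. -/
theorem localized_approximate_eigenfunction
    (d : ℕ) (hd : 1 ≤ d)
    (vhat : ℤ → ℂ) (hv : ∀ k : ℤ, vhat (-k) = starRingEnd ℂ (vhat k))
    (w : ℝ → ℝ) (hw : ContDiff ℝ 1 w) (hwper : Function.Periodic w 1)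
    (Lop : ℝ → ℝ → (lp (fun _ : ℤ => ℂ) 2 →L[ℂ] lp (fun _ : ℤ => ℂ) 2))
    (hLop : ∀ (α θ : ℝ) (u : lp (fun _ : ℤ => ℂ) 2) (n : ℤ),
      (Lop α θ u : ∀ _ : ℤ, ℂ) n
        = (∑ k ∈ Finset.Icc (-(d : ℤ)) (d : ℤ), vhat k * (u : ∀ _ : ℤ, ℂ) (n - k))
          + (w (θ + (n : ℝ) * α) : ℂ) * (u : ∀ _ : ℤ, ℂ) n) :
    ∃ L₀ : ℕ, 1 ≤ L₀ ∧ ∃ C₁ > (0 : ℝ), ∀ L : ℕ, L₀ ≤ L →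
      ∀ (α θ lam : ℝ) (φ : lp (fun _ : ℤ => ℂ) 2), φ ≠ 0 →
        ‖Lop α θ φ - (lam : ℂ) • φ‖ ≤ ‖φ‖ / (L : ℝ) →
        ∃ j : ℤ, ∃ ψ : lp (fun _ : ℤ => ℂ) 2,
          (∀ n : ℤ, (ψ : ∀ _ : ℤ, ℂ) n = (eta j L n : ℂ) * (φ : ∀ _ : ℤ, ℂ) n) ∧
          ψ ≠ 0 ∧
          ‖Lop α θ ψ - (lam : ℂ) • ψ‖ ≤ Real.sqrt C₁ / (L : ℝ) * ‖ψ‖ := by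
  classical
  set I : Finset ℤ := Finset.Icc (-(d : ℤ)) (d : ℤ) with hIdef
  set V₁ : ℝ := ∑ k ∈ I, ‖vhat k‖ with hV₁def
  have hV₁ : 0 ≤ V₁ := Finset.sum_nonneg fun _ _ => norm_nonneg _
  set C₁ : ℝ := 25 + 41 * (d:ℝ)^2 * V₁^2 with hC₁def
  have hC₁pos : 0 < C₁ := by positivity
  refine ⟨d, hd, C₁, hC₁pos, ?_⟩
  intro L hLd α θ lam φ hφ hsmall
  have hL1 : 1 ≤ L := le_trans hd hLd
  have hLpos : (0:ℝ) < L := by exact_mod_cast hL1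
  by_contra hcon
  push_neg at hcon
  -- the cut-off functions
  have hmem : ∀ j : ℤ, Memℓp (fun n => (eta j L n : ℂ) * (φ : ∀ _ : ℤ, ℂ) n) 2 := by
    intro j
    apply mem_psi L j
    intro n hn
    rw [eta_zero hn]
    simp
  set ψ : ℤ → lp (fun _ : ℤ => ℂ) 2 :=
    fun j => ⟨fun n => (eta j L n : ℂ) * (φ : ∀ _ : ℤ, ℂ) n, hmem j⟩ with hψdef
  have hψcoe : ∀ j n, (ψ j : ∀ _ : ℤ, ℂ) n = (eta j L n : ℂ) * (φ : ∀ _ : ℤ, ℂ) n :=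
    fun j n => rfl
  -- the strict inequality from the contradiction hypothesis
  have key : ∀ j : ℤ, C₁ / (L:ℝ)^2 * ‖ψ j‖^2 ≤ ‖Lop α θ (ψ j) - (lam : ℂ) • (ψ j)‖^2 := by
    intro j
    by_cases hz : ψ j = 0
    · rw [hz, norm_zero]
      simp only [ne_eq, mul_zero, zero_pow, OfNat.ofNat_ne_zero, not_false_eq_true]
      positivity
    · have hstrict := hcon j (ψ j) (hψcoe j) hz
      have h1 : 0 ≤ Real.sqrt C₁ / L * ‖ψ j‖ := by positivity
      have h2 := pow_le_pow_left₀ h1 hstrict.le 2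
      calc C₁ / (L:ℝ)^2 * ‖ψ j‖^2 = (Real.sqrt C₁ / L * ‖ψ j‖)^2 := by
            rw [mul_pow, div_pow, Real.sq_sqrt hC₁pos.le]
        _ ≤ _ := h2
  -- coefficient of the operator applied to any lp element
  have hDcoe : ∀ (x : lp (fun _ : ℤ => ℂ) 2) (n : ℤ),
      ((Lop α θ x - (lam : ℂ) • x : lp (fun _ : ℤ => ℂ) 2) : ∀ _ : ℤ, ℂ) n
        = (∑ k ∈ I, vhat k * (x : ∀ _ : ℤ, ℂ) (n - k))
          + (w (θ + (n : ℝ) * α) : ℂ) * (x : ∀ _ : ℤ, ℂ) n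
          - (lam : ℂ) * (x : ∀ _ : ℤ, ℂ) n := by
    intro x n
    rw [lp.coeFn_sub, Pi.sub_apply, lp.coeFn_smul, Pi.smul_apply, hLop, smul_eq_mul]
  -- pointwise identity for D (ψ j)
  set B : ℤ → ℤ → ℂ := fun j n =>
    ∑ k ∈ I, vhat k * (((eta j L (n - k) - eta j L n : ℝ)) : ℂ) * (φ : ∀ _ : ℤ, ℂ) (n - k)
    with hBdef
  have hDψ : ∀ j n,
      ((Lop α θ (ψ j) - (lam : ℂ) • (ψ j) : lp (fun _ : ℤ => ℂ) 2) : ∀ _ : ℤ, ℂ) n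
        = (eta j L n : ℂ) *
            ((Lop α θ φ - (lam : ℂ) • φ : lp (fun _ : ℤ => ℂ) 2) : ∀ _ : ℤ, ℂ) n
          + B j n := by
    intro j n
    rw [hDcoe (ψ j) n, hDcoe φ n]
    simp only [hψcoe, hBdef]
    have hsum : ∑ k ∈ I, vhat k * ((eta j L (n - k) : ℂ) * (φ : ∀ _ : ℤ, ℂ) (n - k))
        = (eta j L n : ℂ) * (∑ k ∈ I, vhat k * (φ : ∀ _ : ℤ, ℂ) (n - k))
          + ∑ k ∈ I, vhat k * (((eta j L (n - k) - eta j L n : ℝ)) : ℂ)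
              * (φ : ∀ _ : ℤ, ℂ) (n - k) := by
      rw [Finset.mul_sum, ← Finset.sum_add_distrib]
      refine Finset.sum_congr rfl fun k _ => ?_
      push_cast
      ring
    rw [hsum]
    ring
  -- the indicator
  set ind : ℤ → ℤ → ℝ := fun j n => if |n - j| ≤ (L:ℤ) + d then 1 else 0 with hinddef
  set W : ℤ → ℝ := fun n => ∑ k ∈ I, ‖vhat k‖ * ‖(φ : ∀ _ : ℤ, ℂ) (n - k)‖^2 with hWdef
  have hW0 : ∀ n, 0 ≤ W n := fun n => Finset.sum_nonneg fun _ _ => by positivity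
  have hind0 : ∀ j n, 0 ≤ ind j n := by
    intro j n; simp only [hinddef]; split_ifs <;> norm_num
  have hindsq : ∀ j n, (ind j n)^2 = ind j n := by
    intro j n; simp only [hinddef]; split_ifs <;> norm_num
  have hB2 : ∀ j n, ‖B j n‖^2 ≤ ((d:ℝ)/L)^2 * ind j n * (V₁ * W n) := by
    intro j n
    have hdiff : ∀ k ∈ I, |eta j L (n - k) - eta j L n| ≤ (d:ℝ)/L * ind j n := by
      intro k hk
      have hkd : |k| ≤ (d:ℤ) := by
        rw [hIdef, Finset.mem_Icc] at hk; rw [abs_le]; omega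
      by_cases hnear : |n - j| ≤ (L:ℤ) + d
      · have hone : ind j n = 1 := by simp only [hinddef]; rw [if_pos hnear]
        rw [hone, mul_one]
        refine (eta_lip hL1 j (n - k) n).trans ?_
        have h1 : |(n - k) - n| = |k| := by rw [show (n - k) - n = -k by ring, abs_neg]
        rw [h1]
        gcongr
        exact_mod_cast hkd
      · push_neg at hnear
        have h1 : eta j L n = 0 := eta_zero (by omega)
        have h2 : eta j L (n - k) = 0 := eta_zero (by
          have h3 : |n - j| ≤ |n - k - j| + |k| := by
            have := abs_add_le (n - k - j) k
            simpa [show n - k - j + k = n - j by ring] using this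
          omega)
        rw [h1, h2]
        have hz : ind j n = 0 := by simp only [hinddef]; rw [if_neg (not_le.mpr hnear)]
        rw [hz]
        simp
    have hb : ‖B j n‖ ≤ ((d:ℝ)/L * ind j n) * ∑ k ∈ I, ‖vhat k‖ * ‖(φ : ∀ _ : ℤ, ℂ) (n - k)‖ := by
      simp only [hBdef]
      refine (norm_sum_le _ _).trans ?_
      rw [Finset.mul_sum]
      refine Finset.sum_le_sum fun k hk => ?_
      rw [norm_mul, norm_mul, Complex.norm_real]
      calc ‖vhat k‖ * |eta j L (n - k) - eta j L n| * ‖(φ : ∀ _ : ℤ, ℂ) (n - k)‖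
          ≤ ‖vhat k‖ * ((d:ℝ)/L * ind j n) * ‖(φ : ∀ _ : ℤ, ℂ) (n - k)‖ := by
            exact mul_le_mul_of_nonneg_right
              (mul_le_mul_of_nonneg_left (hdiff k hk) (norm_nonneg _)) (norm_nonneg _)
        _ = (d:ℝ)/L * ind j n * (‖vhat k‖ * ‖(φ : ∀ _ : ℤ, ℂ) (n - k)‖) := by ring
    have hcs : (∑ k ∈ I, ‖vhat k‖ * ‖(φ : ∀ _ : ℤ, ℂ) (n - k)‖)^2 ≤ V₁ * W n := by
      have h := Finset.sum_mul_sq_le_sq_mul_sq I (fun k => Real.sqrt ‖vhat k‖)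
        (fun k => Real.sqrt ‖vhat k‖ * ‖(φ : ∀ _ : ℤ, ℂ) (n - k)‖)
      have e1 : ∀ k ∈ I, Real.sqrt ‖vhat k‖ * (Real.sqrt ‖vhat k‖ * ‖(φ : ∀ _ : ℤ, ℂ) (n - k)‖)
          = ‖vhat k‖ * ‖(φ : ∀ _ : ℤ, ℂ) (n - k)‖ := fun k _ => by
        rw [← mul_assoc, Real.mul_self_sqrt (norm_nonneg _)]
      have e2 : ∀ k ∈ I, (Real.sqrt ‖vhat k‖)^2 = ‖vhat k‖ := fun k _ =>
        Real.sq_sqrt (norm_nonneg _)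
      have e3 : ∀ k ∈ I, (Real.sqrt ‖vhat k‖ * ‖(φ : ∀ _ : ℤ, ℂ) (n - k)‖)^2
          = ‖vhat k‖ * ‖(φ : ∀ _ : ℤ, ℂ) (n - k)‖^2 := fun k _ => by
        rw [mul_pow, Real.sq_sqrt (norm_nonneg _)]
      rw [Finset.sum_congr rfl e1, Finset.sum_congr rfl e2, Finset.sum_congr rfl e3] at h
      exact h
    have hs0 : 0 ≤ ∑ k ∈ I, ‖vhat k‖ * ‖(φ : ∀ _ : ℤ, ℂ) (n - k)‖ :=
      Finset.sum_nonneg fun k _ => by positivity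
    have hsq := pow_le_pow_left₀ (norm_nonneg (B j n)) hb 2
    calc ‖B j n‖^2 ≤ (((d:ℝ)/L * ind j n) * ∑ k ∈ I, ‖vhat k‖ * ‖(φ : ∀ _ : ℤ, ℂ) (n - k)‖)^2 :=
          hsq
      _ = ((d:ℝ)/L)^2 * (ind j n)^2 * (∑ k ∈ I, ‖vhat k‖ * ‖(φ : ∀ _ : ℤ, ℂ) (n - k)‖)^2 := by
          ring
      _ ≤ ((d:ℝ)/L)^2 * (ind j n)^2 * (V₁ * W n) := by
          refine mul_le_mul_of_nonneg_left hcs ?_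
          have := hind0 j n
          positivity
      _ = ((d:ℝ)/L)^2 * ind j n * (V₁ * W n) := by rw [hindsq]
  -- pointwise quadratic bound
  have hpoint : ∀ j n,
      ‖((Lop α θ (ψ j) - (lam : ℂ) • (ψ j) : lp (fun _ : ℤ => ℂ) 2) : ∀ _ : ℤ, ℂ) n‖^2
        ≤ 2 * ((eta j L n)^2 *
              ‖((Lop α θ φ - (lam : ℂ) • φ : lp (fun _ : ℤ => ℂ) 2) : ∀ _ : ℤ, ℂ) n‖^2)
          + 2 * (((d:ℝ)/L)^2 * ind j n * (V₁ * W n)) := by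
    intro j n
    have h1 : ‖((Lop α θ (ψ j) - (lam : ℂ) • (ψ j) : lp (fun _ : ℤ => ℂ) 2) : ∀ _ : ℤ, ℂ) n‖
        ≤ eta j L n * ‖((Lop α θ φ - (lam : ℂ) • φ : lp (fun _ : ℤ => ℂ) 2) : ∀ _ : ℤ, ℂ) n‖
          + ‖B j n‖ := by
      rw [hDψ j n]
      refine (norm_add_le _ _).trans (le_of_eq ?_)
      rw [norm_mul, Complex.norm_real, Real.norm_eq_abs,
        abs_of_nonneg (eta_nonneg hL1 j n)]
    have h2 := hB2 j n
    have h3 : 0 ≤ eta j L n := eta_nonneg hL1 j n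
    have h4 := norm_nonneg (B j n)
    have h5 := norm_nonneg
      (((Lop α θ φ - (lam : ℂ) • φ : lp (fun _ : ℤ => ℂ) 2) : ∀ _ : ℤ, ℂ) n)
    have h6 := norm_nonneg
      (((Lop α θ (ψ j) - (lam : ℂ) • (ψ j) : lp (fun _ : ℤ => ℂ) 2) : ∀ _ : ℤ, ℂ) n)
    nlinarith [sq_nonneg (eta j L n
      * ‖((Lop α θ φ - (lam : ℂ) • φ : lp (fun _ : ℤ => ℂ) 2) : ∀ _ : ℤ, ℂ) n‖ - ‖B j n‖),
      mul_self_le_mul_self h6 h1]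
  -- ENNReal bookkeeping
  set e : ℝ → ℝ≥0∞ := ENNReal.ofReal with hedef
  set Φ : ℝ≥0∞ := ∑' n : ℤ, e (‖(φ : ∀ _ : ℤ, ℂ) n‖^2) with hΦdef
  have hΦeq : Φ = e (‖φ‖^2) := (energy_eq φ).symm
  have hΦ0 : Φ ≠ 0 := by
    rw [hΦeq]
    have hn : 0 < ‖φ‖ := norm_pos_iff.mpr hφ
    exact (ENNReal.ofReal_pos.mpr (by positivity)).ne'
  have hΦtop : Φ ≠ ⊤ := by rw [hΦeq]; exact ENNReal.ofReal_ne_top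
  set T : ℤ → ℝ≥0∞ := fun n => ∑' j : ℤ, e ((eta j L n)^2) with hTdef
  set U : ℤ → ℝ≥0∞ := fun n => ∑' j : ℤ, e (ind j n) with hUdef
  have hT_up : ∀ n, T n ≤ ((3 * L : ℕ) : ℝ≥0∞) := by
    intro n
    have hz : ∀ j ∉ Finset.Icc (n - (L:ℤ)) (n + L), e ((eta j L n)^2) = 0 := by
      intro j hj
      have hlt : (L:ℤ) < |n - j| := by
        simp only [Finset.mem_Icc, not_and_or, not_le] at hj
        rw [lt_abs]
        rcases hj with h | h
        · left; omega
        · right; omega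
      rw [eta_zero hlt]
      simp [hedef]
    calc T n = ∑ j ∈ Finset.Icc (n - (L:ℤ)) (n + L), e ((eta j L n)^2) := tsum_eq_sum hz
      _ ≤ ∑ _j ∈ Finset.Icc (n - (L:ℤ)) (n + L), 1 := by
          refine Finset.sum_le_sum fun j _ => ?_
          rw [hedef]
          refine ENNReal.ofReal_le_one.mpr ?_
          have h1 := eta_nonneg hL1 j n
          have h2 := eta_le_one hL1 j n
          nlinarith
      _ = ((Finset.Icc (n - (L:ℤ)) (n + L)).card : ℝ≥0∞) := by
          rw [Finset.sum_const, nsmul_eq_mul, mul_one]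
      _ ≤ _ := by
          rw [Int.card_Icc, show (n + (L:ℤ) + 1 - (n - L)).toNat = 2*L+1 by omega]
          exact_mod_cast Nat.cast_le.mpr (show 2*L+1 ≤ 3*L by omega)
  have hone_eq : (1 : ℝ≥0∞) = e 1 := by simp [hedef]
  have hT_low : ∀ n, ((L : ℕ) : ℝ≥0∞) ≤ 4 * T n := by
    intro n
    set q : ℕ := L / 2 with hq
    have hterm : ∀ j ∈ Finset.Icc (n - (q:ℤ)) (n + q), (1:ℝ≥0∞) ≤ 4 * e ((eta j L n)^2) := by
      intro j hj
      have hjq : |n - j| ≤ (q:ℤ) := by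
        simp only [Finset.mem_Icc] at hj
        rw [abs_le]; omega
      have hetaq : (1:ℝ)/2 ≤ eta j L n := by
        have hbranch : |n - j| ≤ (L:ℤ) :=
          le_trans hjq (by exact_mod_cast Nat.div_le_self L 2)
        unfold eta
        rw [if_pos hbranch]
        have h1 : ((|n - j| : ℤ) : ℝ) ≤ (q:ℝ) := by exact_mod_cast hjq
        have h2 : (q:ℝ) ≤ (L:ℝ)/2 := by
          have h3 : 2 * q ≤ L := by omega
          have h4 : ((2 * q : ℕ) : ℝ) ≤ (L:ℝ) := by exact_mod_cast h3
          push_cast at h4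
          linarith
        have h5 : ((|n - j| : ℤ) : ℝ) / (L:ℝ) ≤ ((L:ℝ)/2) / (L:ℝ) := by
          gcongr
          linarith
        have h6 : ((L:ℝ)/2) / (L:ℝ) = 1/2 := by field_simp
        rw [h6] at h5
        linarith
      have h7 : (1:ℝ) ≤ 4 * (eta j L n)^2 := by nlinarith
      calc (1:ℝ≥0∞) = e 1 := hone_eq
        _ ≤ e (4 * (eta j L n)^2) := ENNReal.ofReal_le_ofReal h7
        _ = e 4 * e ((eta j L n)^2) := by
            rw [hedef, ENNReal.ofReal_mul (by norm_num)]
        _ = 4 * e ((eta j L n)^2) := by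
            rw [hedef, ENNReal.ofReal_ofNat]
    calc ((L:ℕ) : ℝ≥0∞) ≤ ((2*q+1 : ℕ) : ℝ≥0∞) := Nat.cast_le.mpr (by omega)
      _ = ((Finset.Icc (n - (q:ℤ)) (n + q)).card : ℝ≥0∞) := by
          rw [Int.card_Icc, show (n + (q:ℤ) + 1 - (n - q)).toNat = 2*q+1 by omega]
      _ = ∑ _j ∈ Finset.Icc (n - (q:ℤ)) (n + q), (1:ℝ≥0∞) := by
          rw [Finset.sum_const, nsmul_eq_mul, mul_one]
      _ ≤ ∑ j ∈ Finset.Icc (n - (q:ℤ)) (n + q), 4 * e ((eta j L n)^2) :=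
          Finset.sum_le_sum hterm
      _ ≤ ∑' j : ℤ, 4 * e ((eta j L n)^2) := ENNReal.sum_le_tsum _
      _ = 4 * T n := ENNReal.tsum_mul_left
  have hU_up : ∀ n, U n ≤ ((5 * L : ℕ) : ℝ≥0∞) := by
    intro n
    have hz : ∀ j ∉ Finset.Icc (n - ((L:ℤ) + d)) (n + ((L:ℤ) + d)), e (ind j n) = 0 := by
      intro j hj
      have hlt : ¬ (|n - j| ≤ (L:ℤ) + d) := by
        simp only [Finset.mem_Icc, not_and_or, not_le] at hj
        rw [not_le, lt_abs]
        rcases hj with h | h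
        · left; omega
        · right; omega
      simp only [hinddef]
      rw [if_neg hlt]
      simp [hedef]
    calc U n = ∑ j ∈ Finset.Icc (n - ((L:ℤ) + d)) (n + ((L:ℤ) + d)), e (ind j n) :=
          tsum_eq_sum hz
      _ ≤ ∑ _j ∈ Finset.Icc (n - ((L:ℤ) + d)) (n + ((L:ℤ) + d)), 1 := by
          refine Finset.sum_le_sum fun j _ => ?_
          rw [hedef]
          refine ENNReal.ofReal_le_one.mpr ?_
          simp only [hinddef]
          split_ifs <;> norm_num
      _ = ((Finset.Icc (n - ((L:ℤ) + d)) (n + ((L:ℤ) + d))).card : ℝ≥0∞) := by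
          rw [Finset.sum_const, nsmul_eq_mul, mul_one]
      _ ≤ _ := by
          rw [Int.card_Icc,
            show (n + ((L:ℤ) + d) + 1 - (n - ((L:ℤ) + d))).toNat = 2*(L+d)+1 by omega]
          exact_mod_cast Nat.cast_le.mpr (show 2*(L+d)+1 ≤ 5*L by omega)
  have hshift : ∀ k : ℤ, ∑' n : ℤ, e (‖(φ : ∀ _ : ℤ, ℂ) (n - k)‖^2) = Φ := by
    intro k
    exact (Equiv.subRight k).tsum_eq fun n => e (‖(φ : ∀ _ : ℤ, ℂ) n‖^2)
  -- total mass of the cut-offs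
  set A : ℝ≥0∞ := ∑' j : ℤ, e (‖ψ j‖^2) with hAdef
  have hpsi_term : ∀ j n, e (‖(ψ j : ∀ _ : ℤ, ℂ) n‖^2)
      = e ((eta j L n)^2) * e (‖(φ : ∀ _ : ℤ, ℂ) n‖^2) := by
    intro j n
    rw [hψcoe j n, hedef, ← ENNReal.ofReal_mul (sq_nonneg _)]
    congr 1
    rw [norm_mul, Complex.norm_real, Real.norm_eq_abs,
      abs_of_nonneg (eta_nonneg hL1 j n), mul_pow]
  have hA : A = ∑' n : ℤ, T n * e (‖(φ : ∀ _ : ℤ, ℂ) n‖^2) := by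
    calc A = ∑' (j : ℤ) (n : ℤ), e (‖(ψ j : ∀ _ : ℤ, ℂ) n‖^2) := by
          rw [hAdef]
          exact tsum_congr fun j => by rw [hedef, energy_eq]
      _ = ∑' (n : ℤ) (j : ℤ), e (‖(ψ j : ∀ _ : ℤ, ℂ) n‖^2) := ENNReal.tsum_comm
      _ = ∑' (n : ℤ) (j : ℤ), e ((eta j L n)^2) * e (‖(φ : ∀ _ : ℤ, ℂ) n‖^2) :=
          tsum_congr fun n => tsum_congr fun j => hpsi_term j n
      _ = ∑' n : ℤ, T n * e (‖(φ : ∀ _ : ℤ, ℂ) n‖^2) :=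
          tsum_congr fun n => ENNReal.tsum_mul_right
  have hAlow : ((L : ℕ) : ℝ≥0∞) * Φ ≤ 4 * A := by
    calc ((L : ℕ) : ℝ≥0∞) * Φ = ∑' n : ℤ, ((L:ℕ) : ℝ≥0∞) * e (‖(φ : ∀ _ : ℤ, ℂ) n‖^2) := by
          rw [hΦdef, ENNReal.tsum_mul_left]
      _ ≤ ∑' n : ℤ, (4 * T n) * e (‖(φ : ∀ _ : ℤ, ℂ) n‖^2) :=
          ENNReal.tsum_le_tsum fun n => mul_le_mul_left (hT_low n) _
      _ = 4 * ∑' n : ℤ, T n * e (‖(φ : ∀ _ : ℤ, ℂ) n‖^2) := by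
          rw [← ENNReal.tsum_mul_left]
          exact tsum_congr fun n => by ring
      _ = 4 * A := by rw [hA]
  -- total energy of the defects
  set G : ℝ≥0∞ := ∑' j : ℤ, e (‖Lop α θ (ψ j) - (lam : ℂ) • (ψ j)‖^2) with hGdef
  have energy' : ∀ x : lp (fun _ : ℤ => ℂ) 2,
      e (‖x‖^2) = ∑' n : ℤ, e (‖(x : ∀ _ : ℤ, ℂ) n‖^2) := by
    intro x
    rw [hedef]
    exact energy_eq x
  have hGup : G ≤ e ((6 + 10 * (d:ℝ)^2 * V₁^2) / L) * Φ := by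
    set r2 : ℤ → ℝ≥0∞ := fun n =>
      e (‖((Lop α θ φ - (lam : ℂ) • φ : lp (fun _ : ℤ => ℂ) 2) : ∀ _ : ℤ, ℂ) n‖^2) with hr2def
    set R : ℝ≥0∞ := ∑' n : ℤ, r2 n with hRdef
    set c2 : ℝ≥0∞ := e (2 * (((d:ℝ)/L)^2 * V₁)) with hc2def
    have hstep : ∀ j n,
        e (‖((Lop α θ (ψ j) - (lam : ℂ) • (ψ j) : lp (fun _ : ℤ => ℂ) 2) : ∀ _ : ℤ, ℂ) n‖^2)
          ≤ 2 * (e ((eta j L n)^2) * r2 n) + c2 * (e (ind j n) * e (W n)) := by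
      intro j n
      simp only [hedef, hc2def, hr2def]
      refine le_trans (ENNReal.ofReal_le_ofReal (hpoint j n)) ?_
      have hx0 : (0:ℝ) ≤ 2 * ((eta j L n)^2
          * ‖((Lop α θ φ - (lam : ℂ) • φ : lp (fun _ : ℤ => ℂ) 2) : ∀ _ : ℤ, ℂ) n‖^2) := by
        positivity
      have hy0 : (0:ℝ) ≤ 2 * (((d:ℝ)/L)^2 * ind j n * (V₁ * W n)) := by
        have := hind0 j n
        have := hW0 n
        positivity
      refine le_of_eq ?_
      rw [ENNReal.ofReal_add hx0 hy0]
      congr 1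
      · rw [ENNReal.ofReal_mul (by norm_num : (0:ℝ) ≤ 2), ENNReal.ofReal_ofNat,
          ENNReal.ofReal_mul (sq_nonneg _)]
      · rw [show 2 * (((d:ℝ)/L)^2 * ind j n * (V₁ * W n))
            = (2 * (((d:ℝ)/L)^2 * V₁)) * (ind j n * W n) by ring,
          ENNReal.ofReal_mul (by positivity), ENNReal.ofReal_mul (hind0 j n)]
    have h0 : G ≤ 2 * (∑' n : ℤ, T n * r2 n) + c2 * (∑' n : ℤ, U n * e (W n)) := by
      calc G ≤ ∑' (j : ℤ) (n : ℤ),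
            (2 * (e ((eta j L n)^2) * r2 n) + c2 * (e (ind j n) * e (W n))) := by
            rw [hGdef]
            refine ENNReal.tsum_le_tsum fun j => ?_
            rw [energy' _]
            exact ENNReal.tsum_le_tsum fun n => hstep j n
        _ = ∑' (n : ℤ) (j : ℤ),
            (2 * (e ((eta j L n)^2) * r2 n) + c2 * (e (ind j n) * e (W n))) :=
            ENNReal.tsum_comm
        _ = ∑' n : ℤ, (2 * (T n * r2 n) + c2 * (U n * e (W n))) := by
            refine tsum_congr fun n => ?_
            rw [ENNReal.tsum_add]
            congr 1
            · rw [ENNReal.tsum_mul_left]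
              congr 1
              exact ENNReal.tsum_mul_right
            · rw [ENNReal.tsum_mul_left]
              congr 1
              exact ENNReal.tsum_mul_right
        _ = 2 * (∑' n : ℤ, T n * r2 n) + c2 * (∑' n : ℤ, U n * e (W n)) := by
            rw [ENNReal.tsum_add, ENNReal.tsum_mul_left, ENNReal.tsum_mul_left]
    have hR : R ≤ e (1/(L:ℝ)^2) * Φ := by
      have h1 : ‖Lop α θ φ - (lam : ℂ) • φ‖^2 ≤ 1/(L:ℝ)^2 * ‖φ‖^2 := by
        have h3 : 0 ≤ ‖φ‖ / (L:ℝ) := by positivity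
        have h4 := norm_nonneg (Lop α θ φ - (lam : ℂ) • φ)
        have h5 : ‖Lop α θ φ - (lam : ℂ) • φ‖^2 ≤ (‖φ‖ / (L:ℝ))^2 := by nlinarith [hsmall]
        calc ‖Lop α θ φ - (lam : ℂ) • φ‖^2 ≤ (‖φ‖ / (L:ℝ))^2 := h5
          _ = 1/(L:ℝ)^2 * ‖φ‖^2 := by field_simp
      calc R = e (‖Lop α θ φ - (lam : ℂ) • φ‖^2) := (energy' _).symm
        _ ≤ e (1/(L:ℝ)^2 * ‖φ‖^2) := by
            rw [hedef]; exact ENNReal.ofReal_le_ofReal h1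
        _ = e (1/(L:ℝ)^2) * e (‖φ‖^2) := by
            rw [hedef, ENNReal.ofReal_mul (by positivity)]
        _ = e (1/(L:ℝ)^2) * Φ := by rw [hΦeq]
    have hSW : (∑' n : ℤ, e (W n)) = e V₁ * Φ := by
      calc ∑' n : ℤ, e (W n)
          = ∑' n : ℤ, ∑ k ∈ I, e (‖vhat k‖) * e (‖(φ : ∀ _ : ℤ, ℂ) (n - k)‖^2) := by
            refine tsum_congr fun n => ?_
            rw [hWdef, hedef, ENNReal.ofReal_sum_of_nonneg (fun k _ => by positivity)]
            exact Finset.sum_congr rfl fun k _ => by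
              rw [← ENNReal.ofReal_mul (norm_nonneg _)]
        _ = ∑ k ∈ I, ∑' n : ℤ, e (‖vhat k‖) * e (‖(φ : ∀ _ : ℤ, ℂ) (n - k)‖^2) :=
            Summable.tsum_finsetSum fun k _ => ENNReal.summable
        _ = ∑ k ∈ I, e (‖vhat k‖) * Φ := Finset.sum_congr rfl fun k _ => by
            rw [ENNReal.tsum_mul_left, hshift k]
        _ = (∑ k ∈ I, e (‖vhat k‖)) * Φ := by rw [Finset.sum_mul]
        _ = e V₁ * Φ := by
            rw [hV₁def, hedef, ← ENNReal.ofReal_sum_of_nonneg (fun k _ => norm_nonneg _)]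
    refine h0.trans ?_
    have hterm1 : 2 * (∑' n : ℤ, T n * r2 n) ≤ e (6/(L:ℝ)) * Φ := by
      calc 2 * (∑' n : ℤ, T n * r2 n) ≤ 2 * (∑' n : ℤ, ((3*L:ℕ):ℝ≥0∞) * r2 n) :=
            mul_le_mul_right (ENNReal.tsum_le_tsum fun n =>
              mul_le_mul_left (hT_up n) _) _
        _ = 2 * (((3*L:ℕ):ℝ≥0∞) * R) := by rw [hRdef, ENNReal.tsum_mul_left]
        _ ≤ 2 * (((3*L:ℕ):ℝ≥0∞) * (e (1/(L:ℝ)^2) * Φ)) :=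
            mul_le_mul_right (mul_le_mul_right hR _) _
        _ = (2 * ((3*L:ℕ):ℝ≥0∞) * e (1/(L:ℝ)^2)) * Φ := by ring
        _ = e (6/(L:ℝ)) * Φ := by
            congr 1
            rw [hedef, show ((3*L:ℕ):ℝ≥0∞) = ENNReal.ofReal ((3*L:ℕ):ℝ) from
                (ENNReal.ofReal_natCast _).symm,
              show (2:ℝ≥0∞) = ENNReal.ofReal 2 from (ENNReal.ofReal_ofNat 2).symm,
              ← ENNReal.ofReal_mul (by norm_num), ← ENNReal.ofReal_mul (by positivity)]
            congr 1
            push_cast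
            field_simp
            ring
    have hterm2 : c2 * (∑' n : ℤ, U n * e (W n)) ≤ e (10*(d:ℝ)^2*V₁^2/(L:ℝ)) * Φ := by
      calc c2 * (∑' n : ℤ, U n * e (W n))
          ≤ c2 * (∑' n : ℤ, ((5*L:ℕ):ℝ≥0∞) * e (W n)) :=
            mul_le_mul_right (ENNReal.tsum_le_tsum fun n =>
              mul_le_mul_left (hU_up n) _) _
        _ = c2 * (((5*L:ℕ):ℝ≥0∞) * (e V₁ * Φ)) := by rw [ENNReal.tsum_mul_left, hSW]
        _ = (c2 * ((5*L:ℕ):ℝ≥0∞) * e V₁) * Φ := by ring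
        _ = e (10*(d:ℝ)^2*V₁^2/(L:ℝ)) * Φ := by
            congr 1
            rw [hc2def, hedef, show ((5*L:ℕ):ℝ≥0∞) = ENNReal.ofReal ((5*L:ℕ):ℝ) from
                (ENNReal.ofReal_natCast _).symm,
              ← ENNReal.ofReal_mul (by positivity), ← ENNReal.ofReal_mul (by positivity)]
            congr 1
            push_cast
            field_simp
            ring
    calc 2 * (∑' n : ℤ, T n * r2 n) + c2 * (∑' n : ℤ, U n * e (W n))
        ≤ e (6/(L:ℝ)) * Φ + e (10*(d:ℝ)^2*V₁^2/(L:ℝ)) * Φ := add_le_add hterm1 hterm2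
      _ = e ((6 + 10 * (d:ℝ)^2 * V₁^2) / L) * Φ := by
          rw [← add_mul]
          congr 1
          rw [hedef, ← ENNReal.ofReal_add (by positivity) (by positivity)]
          congr 1
          ring
  have hGlow : e (C₁ / (L:ℝ)^2) * A ≤ G := by
    rw [hGdef, hAdef, ← ENNReal.tsum_mul_left]
    refine ENNReal.tsum_le_tsum fun j => ?_
    rw [hedef, ← ENNReal.ofReal_mul (by positivity)]
    exact ENNReal.ofReal_le_ofReal (key j)
  -- combine
  have hfinal : e (C₁ / L) * Φ ≤ e (4 * ((6 + 10 * (d:ℝ)^2 * V₁^2) / L)) * Φ := by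
    have h1 : e (C₁ / L) * Φ = e (C₁ / (L:ℝ)^2) * (((L:ℕ) : ℝ≥0∞) * Φ) := by
      rw [← mul_assoc]
      congr 1
      rw [hedef, show ((L:ℕ) : ℝ≥0∞) = ENNReal.ofReal (L:ℝ) by
            rw [ENNReal.ofReal_natCast],
        ← ENNReal.ofReal_mul (by positivity)]
      congr 1
      field_simp
    rw [h1]
    calc e (C₁/(L:ℝ)^2) * (((L:ℕ):ℝ≥0∞) * Φ) ≤ e (C₁/(L:ℝ)^2) * (4 * A) :=
          mul_le_mul_right hAlow _
      _ = 4 * (e (C₁/(L:ℝ)^2) * A) := by ring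
      _ ≤ 4 * G := mul_le_mul_right hGlow _
      _ ≤ 4 * (e ((6 + 10 * (d:ℝ)^2 * V₁^2) / L) * Φ) := mul_le_mul_right hGup _
      _ = e (4 * ((6 + 10 * (d:ℝ)^2 * V₁^2) / L)) * Φ := by
          rw [hedef, ENNReal.ofReal_mul (by norm_num : (0:ℝ) ≤ 4), ENNReal.ofReal_ofNat,
            mul_assoc]
          ring
  have hle : C₁ / L ≤ 4 * ((6 + 10 * (d:ℝ)^2 * V₁^2) / L) := by
    have := (ENNReal.mul_le_mul_iff_left hΦ0 hΦtop).mp hfinal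
    rw [hedef] at this
    exact (ENNReal.ofReal_le_ofReal_iff (by positivity)).mp this
  rw [div_le_iff₀ hLpos] at hle
  have hX : 0 ≤ (d:ℝ)^2 * V₁^2 := by positivity
  rw [hC₁def] at hle
  have : 4 * ((6 + 10 * (d:ℝ)^2 * V₁^2) / L) * L = 24 + 40 * ((d:ℝ)^2 * V₁^2) := by
    field_simp
    ring
  rw [this] at hle
  linarith
end

section
/- Let α, α', θ ∈ ℝ, j ∈ ℤ, and let L ≥ 1 be an integer; set θ' = θ + j(α − α'). Then for every ψ ∈ ℓ²(ℤ,ℂ) with ψ(n) = 0 whenever |n − j| > L, one has ‖(L_{α',θ'} − L_{α,θ})ψ‖ ≤ ‖w'‖_∞ · L · |α − α'| · ‖ψ‖, where ‖w'‖_∞ = sup_{x∈ℝ}|w'(x)|. -/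
open scoped BigOperators ENNReal NNReal

/-- Phase-adjusted comparison of the operators at two frequencies on functions
supported in `[j-L, j+L]`:
`‖(L_{α',θ'} − L_{α,θ})ψ‖ ≤ ‖w'‖_∞ · L · |α − α'| · ‖ψ‖` where `θ' = θ + j(α − α')`. -/
theorem frequency_comparison_on_localized
    (d : ℕ) (hd : 1 ≤ d)
    (vhat : ℤ → ℂ) (hv : ∀ k : ℤ, vhat (-k) = starRingEnd ℂ (vhat k))
    (w : ℝ → ℝ) (hw : ContDiff ℝ 1 w) (hwper : Function.Periodic w 1)
    (Lop : ℝ → ℝ → (lp (fun _ : ℤ => ℂ) 2 →L[ℂ] lp (fun _ : ℤ => ℂ) 2))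
    (hLop : ∀ (α θ : ℝ) (u : lp (fun _ : ℤ => ℂ) 2) (n : ℤ),
      (Lop α θ u : ∀ _ : ℤ, ℂ) n
        = (∑ k ∈ Finset.Icc (-(d : ℤ)) (d : ℤ), vhat k * (u : ∀ _ : ℤ, ℂ) (n - k))
          + (w (θ + (n : ℝ) * α) : ℂ) * (u : ∀ _ : ℤ, ℂ) n) :
    ∀ (α α' θ : ℝ) (j : ℤ) (L : ℕ), 1 ≤ L →
      ∀ ψ : lp (fun _ : ℤ => ℂ) 2,
        (∀ n : ℤ, (L : ℤ) < |n - j| → (ψ : ∀ _ : ℤ, ℂ) n = 0) →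
        ‖Lop α' (θ + (j : ℝ) * (α - α')) ψ - Lop α θ ψ‖
          ≤ (⨆ x : ℝ, |deriv w x|) * (L : ℝ) * |α - α'| * ‖ψ‖ := by
  intro α α' θ j L hL ψ hsupp
  -- derivative is continuous and periodic, hence bounded
  have hdc : Continuous (deriv w) := hw.continuous_deriv le_rfl
  have hdiff : Differentiable ℝ w := hw.differentiable one_ne_zero
  have hdper : Function.Periodic (deriv w) 1 := by
    intro x
    have : deriv (fun y => w (y + 1)) x = deriv w (x + 1) := by
      simpa using deriv_comp_add_const w 1 x
    rw [← this]
    congr 1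
    funext y
    exact hwper y
  obtain ⟨C0, hC0⟩ := isBounded_iff_forall_norm_le.mp
    (hdper.isBounded_of_continuous one_ne_zero hdc)
  have hbdd : BddAbove (Set.range fun x : ℝ => |deriv w x|) := by
    refine ⟨C0, ?_⟩
    rintro _ ⟨x, rfl⟩
    simpa [Real.norm_eq_abs] using hC0 _ ⟨x, rfl⟩
  set M : ℝ := ⨆ x : ℝ, |deriv w x| with hM
  have hMnn : 0 ≤ M := le_trans (abs_nonneg _) (le_ciSup hbdd 0)
  have hlip : ∀ a b : ℝ, |w a - w b| ≤ M * |a - b| := by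
    intro a b
    have := Convex.norm_image_sub_le_of_norm_deriv_le (s := Set.univ) (f := w)
      (fun x _ => hdiff x) (fun x _ => by simpa [Real.norm_eq_abs] using le_ciSup hbdd x)
      convex_univ (Set.mem_univ b) (Set.mem_univ a)
    simpa [Real.norm_eq_abs] using this
  set θ' : ℝ := θ + (j : ℝ) * (α - α') with hθ'
  set D := Lop α' θ' ψ - Lop α θ ψ with hDdef
  set C : ℝ := M * (L : ℝ) * |α - α'| with hC
  have hCnn : 0 ≤ C := by positivity
  have hDn : ∀ n : ℤ, (D : ∀ _ : ℤ, ℂ) n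
      = ((w (θ' + (n : ℝ) * α') - w (θ + (n : ℝ) * α) : ℝ) : ℂ) * (ψ : ∀ _ : ℤ, ℂ) n := by
    intro n
    have h1 : (D : ∀ _ : ℤ, ℂ) n
        = (Lop α' θ' ψ : ∀ _ : ℤ, ℂ) n - (Lop α θ ψ : ∀ _ : ℤ, ℂ) n := by
      rw [hDdef]
      simp
    rw [h1, hLop, hLop]
    push_cast
    ring
  -- pointwise bound
  have hpt : ∀ n : ℤ, ‖(D : ∀ _ : ℤ, ℂ) n‖ ≤ C * ‖(ψ : ∀ _ : ℤ, ℂ) n‖ := by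
    intro n
    rw [hDn n]
    by_cases hn : (L : ℤ) < |n - j|
    · simp [hsupp n hn]
    · push_neg at hn
      rw [norm_mul, Complex.norm_real, Real.norm_eq_abs]
      have harg : |(θ' + (n : ℝ) * α') - (θ + (n : ℝ) * α)| ≤ (L : ℝ) * |α - α'| := by
        have : (θ' + (n : ℝ) * α') - (θ + (n : ℝ) * α) = ((j : ℝ) - n) * (α - α') := by
          rw [hθ']; ring
        rw [this, abs_mul]
        gcongr
        have : |((j : ℤ) : ℝ) - ((n : ℤ) : ℝ)| ≤ (L : ℝ) := by
          rw [← Int.cast_sub, ← Int.cast_abs]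
          exact_mod_cast (abs_sub_comm (j : ℤ) n ▸ hn)
        simpa using this
      have := hlip (θ' + (n : ℝ) * α') (θ + (n : ℝ) * α)
      have hle : |w (θ' + (n : ℝ) * α') - w (θ + (n : ℝ) * α)| ≤ C := by
        rw [hC, mul_assoc]
        exact this.trans (by gcongr)
      gcongr
  -- lp norm comparison
  have hp2 : 0 < (2 : ℝ≥0∞).toReal := by norm_num
  have hψsum : Summable fun n : ℤ => ‖(ψ : ∀ _ : ℤ, ℂ) n‖ ^ (2 : ℝ≥0∞).toReal :=
    (lp.memℓp ψ).summable hp2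
  have hDsum : Summable fun n : ℤ => ‖(D : ∀ _ : ℤ, ℂ) n‖ ^ (2 : ℝ≥0∞).toReal :=
    (lp.memℓp D).summable hp2
  refine le_trans (lp.norm_le_of_tsum_le hp2 (mul_nonneg hCnn (norm_nonneg ψ)) ?_) le_rfl
  have hCsum : Summable fun n : ℤ => (C * ‖(ψ : ∀ _ : ℤ, ℂ) n‖) ^ (2 : ℝ≥0∞).toReal := by
    have : (fun n : ℤ => (C * ‖(ψ : ∀ _ : ℤ, ℂ) n‖) ^ (2 : ℝ≥0∞).toReal)
        = fun n : ℤ => C ^ (2 : ℝ≥0∞).toReal * ‖(ψ : ∀ _ : ℤ, ℂ) n‖ ^ (2 : ℝ≥0∞).toReal := by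
      funext n; exact Real.mul_rpow hCnn (norm_nonneg _)
    rw [this]
    exact hψsum.mul_left _
  calc ∑' n : ℤ, ‖(D : ∀ _ : ℤ, ℂ) n‖ ^ (2 : ℝ≥0∞).toReal
      ≤ ∑' n : ℤ, (C * ‖(ψ : ∀ _ : ℤ, ℂ) n‖) ^ (2 : ℝ≥0∞).toReal := by
        refine Summable.tsum_le_tsum (fun n => ?_) hDsum hCsum
        exact Real.rpow_le_rpow (norm_nonneg _) (hpt n) hp2.le
    _ = ∑' n : ℤ, C ^ (2 : ℝ≥0∞).toReal * ‖(ψ : ∀ _ : ℤ, ℂ) n‖ ^ (2 : ℝ≥0∞).toReal := by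
        congr 1; funext n; exact Real.mul_rpow hCnn (norm_nonneg _)
    _ = C ^ (2 : ℝ≥0∞).toReal * ∑' n : ℤ, ‖(ψ : ∀ _ : ℤ, ℂ) n‖ ^ (2 : ℝ≥0∞).toReal :=
        tsum_mul_left
    _ = C ^ (2 : ℝ≥0∞).toReal * ‖ψ‖ ^ (2 : ℝ≥0∞).toReal := by
        rw [lp.norm_rpow_eq_tsum hp2]
    _ = (C * ‖ψ‖) ^ (2 : ℝ≥0∞).toReal := (Real.mul_rpow hCnn (norm_nonneg _)).symm
end

section
/- Let 𝒥₂ = (0, 1; −1, 0). For every ε ∈ (0, 1/6) and every J ∈ M₂(ℂ) with J* = −J and ‖J − 𝒥₂‖ < ε (spectral norm), there exists A ∈ M₂(ℂ) with ‖A − I₂‖ ≤ ε (in particular A is invertible), 𝒥₂A = A*𝒥₂, and A*JA = 𝒥₂. -/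
open scoped Matrix

/-- The spectral (operator) norm of a rectangular complex matrix. -/
noncomputable def specNorm {m n : ℕ} (M : Matrix (Fin m) (Fin n) ℂ) : ℝ :=
  ‖LinearMap.toContinuousLinearMap (Matrix.toEuclideanLin M)‖

open scoped Matrix.Norms.L2Operator in
private lemma specNorm_eq_norm {m n : ℕ} (M : Matrix (Fin m) (Fin n) ℂ) :
    specNorm M = ‖M‖ := rfl

private lemma norm_coord' {n : ℕ} (w : EuclideanSpace ℂ (Fin n)) (i : Fin n) : ‖w i‖ ≤ ‖w‖ := by
  rw [EuclideanSpace.norm_eq]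
  have h1 : ‖w i‖ ^ 2 ≤ ∑ j, ‖w j‖ ^ 2 :=
    Finset.single_le_sum (f := fun j => ‖w j‖ ^ 2) (fun j _ => by positivity) (Finset.mem_univ i)
  calc ‖w i‖ = Real.sqrt (‖w i‖ ^ 2) := by rw [Real.sqrt_sq (norm_nonneg _)]
    _ ≤ _ := Real.sqrt_le_sqrt h1

open scoped Matrix.Norms.L2Operator in
private lemma entry_le_opNorm {n : ℕ} (M : Matrix (Fin n) (Fin n) ℂ) (i j : Fin n) :
    ‖M i j‖ ≤ ‖M‖ := by
  have h := M.l2_opNorm_mulVec (EuclideanSpace.single j 1)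
  rw [EuclideanSpace.norm_single] at h
  have h2 : ‖((EuclideanSpace.equiv (Fin n) ℂ).symm <| M *ᵥ EuclideanSpace.single j 1) i‖ ≤ ‖M‖ := by
    refine le_trans (norm_coord' _ i) ?_
    simpa using h
  have h3 : (M *ᵥ EuclideanSpace.single j 1) i = M i j := by
    classical
    rw [show ((M *ᵥ EuclideanSpace.single j 1) i) = (M *ᵥ (Pi.single j 1 : Fin n → ℂ)) i from rfl,
      Matrix.mulVec_single]
    simp
  simpa [h3] using h2

private lemma sq_lb (q x : ℝ) (hq : 0 ≤ q) (hx : 0 < x) (h : q^2 ≤ x^2) : q ≤ x := by nlinarith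

set_option maxHeartbeats 2000000 in
private lemma key_ineq (t zr zi a d s r : ℝ) (ht0 : 0 ≤ t) (ht6 : t ≤ 1/6)
    (hz : (zr-1)^2 + zi^2 ≤ t^2) (ha : a^2 ≤ t^2) (hd : d^2 ≤ t^2)
    (hs2 : s^2 = zr^2 + zi^2 - a*d) (hs0 : 0 < s)
    (hr2 : r^2 = 2*zr + 2*s) (hr0 : 0 < r) :
    |2*zr + s - 1 - s*r| + t ≤ t*(s*r) := by
  have had1 : a*d ≤ t^2 := by nlinarith [sq_nonneg (a-d)]
  have had2 : -(t^2) ≤ a*d := by nlinarith [sq_nonneg (a+d)]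
  have hzr1 : 1 - t ≤ zr := by nlinarith [sq_nonneg zi]
  have hzr2 : zr ≤ 1 + t := by nlinarith [sq_nonneg zi]
  have hs2lo : 2/3 ≤ s^2 := by nlinarith [sq_nonneg zi]
  have hs2hi : s^2 ≤ 25/18 := by nlinarith
  have hslo : 816/1000 ≤ s := sq_lb _ _ (by norm_num) hs0 (by nlinarith)
  have hshi : s ≤ 1179/1000 := sq_lb _ _ hs0.le (by norm_num) (by nlinarith)
  have hrlo : 1816/1000 ≤ r := sq_lb _ _ (by norm_num) hr0 (by nlinarith)
  have hsr : 1481/1000 ≤ s*r := by nlinarith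
  have hw : 1482/1000 ≤ 2*zr + s - 1 := by nlinarith
  set v : ℝ := (zr-1)^2 + zi^2 - a*d with hv
  have hv_ub : v ≤ 2*t^2 := by nlinarith
  have hv_lb : -(t^2) ≤ v := by nlinarith [sq_nonneg (zr-1), sq_nonneg zi]
  have hiden : (2*zr + s - 1 - s*r)*(2*zr + s - 1 + s*r) = v*(v - s^2 - 2*s) := by
    rw [hv]
    linear_combination (-(s^2)) * hr2 +
      (2*((zr-1)^2 + zi^2 - a*d) - (zr^2+zi^2-a*d) - 2*s) * hs2
  have hvabs : |v| ≤ 2*t^2 := abs_le.2 ⟨by nlinarith, hv_ub⟩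
  have hfac : |v - s^2 - 2*s| ≤ 3775/1000 := by
    rw [abs_of_nonpos (by nlinarith)]
    nlinarith
  have habs : |2*zr + s - 1 - s*r| * (2*zr + s - 1 + s*r) = |v| * |v - s^2 - 2*s| := by
    rw [← abs_of_pos (show (0:ℝ) < 2*zr + s - 1 + s*r by nlinarith), ← abs_mul, hiden, abs_mul]
  have hbound : |2*zr + s - 1 - s*r| ≤ (2549/1000)*t^2 := by
    have h1 : |v| * |v - s^2 - 2*s| ≤ (2*t^2) * (3775/1000) :=
      mul_le_mul hvabs hfac (abs_nonneg _) (by positivity)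
    nlinarith [abs_nonneg (2*zr + s - 1 - s*r)]
  nlinarith [abs_nonneg (2*zr + s - 1 - s*r),
    mul_le_mul_of_nonneg_left ht6 (mul_nonneg (by norm_num : (0:ℝ) ≤ 2549/1000) ht0)]

open scoped Matrix.Norms.L2Operator in
set_option maxHeartbeats 2000000 in
/-- Quantitative symplectic correction for `2×2` Krein matrices: every skew-Hermitian
`J` with `‖J - 𝒥₂‖ < ε < 1/6` admits `A` with `‖A - I₂‖ ≤ ε` (in particular invertible),
`𝒥₂A = A*𝒥₂`, and `A*JA = 𝒥₂`. -/
theorem symplectic_correction_two_by_two :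
    ∀ ε : ℝ, 0 < ε → ε < 1 / 6 →
    ∀ J : Matrix (Fin 2) (Fin 2) ℂ,
      Jᴴ = -J →
      specNorm (J - !![(0 : ℂ), 1; -1, 0]) < ε →
      ∃ A : Matrix (Fin 2) (Fin 2) ℂ,
        specNorm (A - 1) ≤ ε ∧
        IsUnit A ∧
        !![(0 : ℂ), 1; -1, 0] * A = Aᴴ * !![(0 : ℂ), 1; -1, 0] ∧
        Aᴴ * J * A = !![(0 : ℂ), 1; -1, 0] := by
  intro ε hε0 hε6 J hJ hJn
  rw [specNorm_eq_norm] at hJn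
  set t : ℝ := ‖J - !![(0 : ℂ), 1; -1, 0]‖ with htdef
  have ht0 : 0 ≤ t := norm_nonneg _
  have ht6 : t ≤ 1/6 := by linarith
  set a : ℝ := (J 0 0).im with hadef
  set d : ℝ := (J 1 1).im with hddef
  set zr : ℝ := (J 0 1).re with hzrdef
  set zi : ℝ := (J 0 1).im with hzidef
  -- structure of J
  have h00 := congrFun (congrFun hJ 0) 0
  have h11 := congrFun (congrFun hJ 1) 1
  have h01 := congrFun (congrFun hJ 0) 1
  simp [Matrix.conjTranspose_apply, Complex.ext_iff] at h00 h11 h01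
  have hJm : J = !![(a : ℂ)*Complex.I, (zr : ℂ) + (zi : ℂ)*Complex.I;
      -(zr : ℂ) + (zi : ℂ)*Complex.I, (d : ℂ)*Complex.I] := by
    ext i j
    fin_cases i <;> fin_cases j <;> simp [Complex.ext_iff, hadef, hddef, hzrdef, hzidef] <;>
      first
        | linarith
        | exact ⟨h01.1, h01.2⟩
        | (constructor <;> linarith [h01.1, h01.2])
  -- entry bounds
  have hsqnorm : ∀ w : ℂ, ‖w‖^2 = w.re^2 + w.im^2 := by
    intro w
    rw [Complex.sq_norm, Complex.normSq_apply]
    ring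
  have hE00 : ‖J 0 0‖ ≤ t := by
    have h := entry_le_opNorm (J - !![(0 : ℂ), 1; -1, 0]) 0 0
    simpa using h
  have hE01 : ‖J 0 1 - 1‖ ≤ t := by
    have h := entry_le_opNorm (J - !![(0 : ℂ), 1; -1, 0]) 0 1
    simpa using h
  have hE11 : ‖J 1 1‖ ≤ t := by
    have h := entry_le_opNorm (J - !![(0 : ℂ), 1; -1, 0]) 1 1
    simpa using h
  have ha2 : a^2 ≤ t^2 := by
    have h1 := hsqnorm (J 0 0)
    nlinarith [norm_nonneg (J 0 0), sq_nonneg ((J 0 0).re)]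
  have hd2 : d^2 ≤ t^2 := by
    have h1 := hsqnorm (J 1 1)
    nlinarith [norm_nonneg (J 1 1), sq_nonneg ((J 1 1).re)]
  have hz2 : (zr - 1)^2 + zi^2 ≤ t^2 := by
    have h1 := hsqnorm (J 0 1 - 1)
    have h2 : (J 0 1 - 1).re = zr - 1 := by simp [hzrdef]
    have h3 : (J 0 1 - 1).im = zi := by simp [hzidef]
    rw [h2, h3] at h1
    nlinarith [norm_nonneg (J 0 1 - 1)]
  have hzr1 : 1 - t ≤ zr := by nlinarith [sq_nonneg zi]
  -- the scalars
  have hδ : 0 < zr^2 + zi^2 - a*d := by nlinarith [sq_nonneg (a-d), sq_nonneg zi]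
  set s : ℝ := Real.sqrt (zr^2 + zi^2 - a*d) with hsdef
  have hs2 : s^2 = zr^2 + zi^2 - a*d := Real.sq_sqrt hδ.le
  have hs0 : 0 < s := Real.sqrt_pos.2 hδ
  have hq : 0 < 2*zr + 2*s := by nlinarith
  set r : ℝ := Real.sqrt (2*zr + 2*s) with hrdef
  have hr2 : r^2 = 2*zr + 2*s := Real.sq_sqrt hq.le
  have hr0 : 0 < r := Real.sqrt_pos.2 hq
  set c : ℝ := 1/(s*r) with hcdef
  have hc : c*(s*r) = 1 := by
    rw [hcdef]; field_simp
  have hc0 : 0 < c := by rw [hcdef]; positivity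
  have hkey := key_ineq t zr zi a d s r ht0 ht6 hz2 ha2 hd2 hs2 hs0 hr2 hr0
  -- complex versions of the relations
  have hs2C : (s:ℂ)^2 = (zr:ℂ)^2 + (zi:ℂ)^2 - (a:ℂ)*(d:ℂ) := by
    have h := congrArg (fun x : ℝ => (x:ℂ)) hs2
    push_cast at h
    exact h
  have hcR : c^2*(s^2*(2*zr+2*s)) = 1 := by
    rw [← hr2]
    linear_combination (c*(s*r) + 1) * hc
  have hcC : (c:ℂ)^2*((s:ℂ)^2*(2*(zr:ℂ)+2*(s:ℂ))) = 1 := by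
    have h := congrArg (fun x : ℝ => (x:ℂ)) hcR
    push_cast at h
    exact h
  have hI : Complex.I^2 = -1 := Complex.I_sq
  -- the matrix A
  set A : Matrix (Fin 2) (Fin 2) ℂ :=
    !![(c:ℂ)*((zr:ℂ)+(s:ℂ)) + (c:ℂ)*(zi:ℂ)*Complex.I, (c:ℂ)*(d:ℂ)*Complex.I;
       -((c:ℂ)*(a:ℂ)*Complex.I), (c:ℂ)*((zr:ℂ)+(s:ℂ)) - (c:ℂ)*(zi:ℂ)*Complex.I] with hAdef
  refine ⟨A, ?_, ?_, ?_, ?_⟩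
  · -- norm bound
    have hA1 : A - 1 = (((2*zr+s)*c - c - 1 : ℝ) : ℂ) • (1 : Matrix (Fin 2) (Fin 2) ℂ) +
        ((c : ℝ) : ℂ) • (!![(0 : ℂ), 1; -1, 0] * (J - !![(0 : ℂ), 1; -1, 0])) := by
      rw [hJm]
      ext i j
      fin_cases i <;> fin_cases j <;>
        simp [hAdef, Matrix.mul_apply, Fin.sum_univ_two, Matrix.one_apply] <;>
        push_cast <;> ring
    have h𝒥 : ‖(!![(0 : ℂ), 1; -1, 0] : Matrix (Fin 2) (Fin 2) ℂ)‖ = 1 := by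
      have hu : (!![(0 : ℂ), 1; -1, 0])ᴴ * !![(0 : ℂ), 1; -1, 0] = 1 := by
        ext i j
        fin_cases i <;> fin_cases j <;>
          simp [Matrix.mul_apply, Fin.sum_univ_two, Matrix.conjTranspose_apply, Matrix.one_apply]
      have h2 := Matrix.l2_opNorm_conjTranspose_mul_self (!![(0 : ℂ), 1; -1, 0])
      rw [hu] at h2
      have h3 : ‖(1 : Matrix (Fin 2) (Fin 2) ℂ)‖ = 1 := CStarRing.norm_one
      nlinarith [norm_nonneg (!![(0 : ℂ), 1; -1, 0] : Matrix (Fin 2) (Fin 2) ℂ)]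
    have hcalc : ‖A - 1‖ ≤ |(2*zr+s)*c - c - 1| + c * t := by
      rw [hA1]
      refine le_trans (norm_add_le _ _) ?_
      have e1 : ‖(((2*zr+s)*c - c - 1 : ℝ) : ℂ) • (1 : Matrix (Fin 2) (Fin 2) ℂ)‖
          = |(2*zr+s)*c - c - 1| := by
        rw [norm_smul, CStarRing.norm_one, mul_one, Complex.norm_real, Real.norm_eq_abs]
      have e2 : ‖((c : ℝ) : ℂ) • (!![(0 : ℂ), 1; -1, 0] * (J - !![(0 : ℂ), 1; -1, 0]))‖ ≤ c * t := by
        rw [norm_smul]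
        have := norm_mul_le (!![(0 : ℂ), 1; -1, 0] : Matrix (Fin 2) (Fin 2) ℂ)
          (J - !![(0 : ℂ), 1; -1, 0])
        rw [h𝒥, one_mul] at this
        have hcn : ‖((c : ℝ) : ℂ)‖ = c := by
          simp [abs_of_pos hc0]
        rw [hcn]
        exact mul_le_mul_of_nonneg_left this hc0.le
      linarith
    have hfin : |(2*zr+s)*c - c - 1| + c * t ≤ t := by
      have he : (2*zr+s)*c - c - 1 = c*(2*zr + s - 1 - s*r) := by linear_combination hc
      rw [he, abs_mul, abs_of_pos hc0]
      have := mul_le_mul_of_nonneg_left hkey hc0.le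
      calc c * |2*zr + s - 1 - s*r| + c * t = c * (|2*zr + s - 1 - s*r| + t) := by ring
        _ ≤ c * (t * (s*r)) := mul_le_mul_of_nonneg_left hkey hc0.le
        _ = t * (c * (s*r)) := by ring
        _ = t := by rw [hc]; ring
    rw [specNorm_eq_norm]
    linarith
  · -- IsUnit
    have hdet : A.det = ((2*c^2*s*(s+zr) : ℝ) : ℂ) := by
      rw [hAdef, Matrix.det_fin_two_of]
      push_cast
      linear_combination (-(c:ℂ)^2) * hs2C + ((a:ℂ)*(d:ℂ)*(c:ℂ)^2 - (zi:ℂ)^2*(c:ℂ)^2) * hI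
    rw [Matrix.isUnit_iff_isUnit_det, hdet, isUnit_iff_ne_zero]
    have hpos : 0 < 2*c^2*s*(s+zr) := by
      have : 0 < s + zr := by nlinarith
      positivity
    exact_mod_cast ne_of_gt hpos
  · -- J₂ A = Aᴴ J₂
    ext i j
    fin_cases i <;> fin_cases j <;>
      simp [hAdef, Matrix.mul_apply, Fin.sum_univ_two, Matrix.conjTranspose_apply,
        map_add, map_mul, map_neg, Complex.conj_ofReal, Complex.conj_I] <;> ring
  · -- Aᴴ J A = J₂
    rw [hJm]
    ext i j
    fin_cases i <;> fin_cases j <;>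
      simp [hAdef, Matrix.mul_apply, Fin.sum_univ_two, Matrix.conjTranspose_apply,
        map_add, map_mul, map_neg, Complex.conj_ofReal, Complex.conj_I]
    · -- (0,0) : = 0
      linear_combination (c:ℂ)^2*((a:ℂ)*Complex.I)*hs2C +
        (c:ℂ)^2*(-(a:ℂ)^2*(d:ℂ)*Complex.I + (zi:ℂ)^2*(a:ℂ)*Complex.I)*hI
    · -- (0,1) : = 1
      linear_combination hcC + (c:ℂ)^2*(-2*(s:ℂ) + (zi:ℂ)*Complex.I - (zr:ℂ))*hs2C +
        (c:ℂ)^2*(2*(a:ℂ)*(d:ℂ)*(s:ℂ) - (zi:ℂ)*(a:ℂ)*(d:ℂ)*Complex.I - 2*(zi:ℂ)^2*(s:ℂ) +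
          (zi:ℂ)^3*Complex.I + (zr:ℂ)*(a:ℂ)*(d:ℂ) - (zr:ℂ)*(zi:ℂ)^2)*hI
    · -- (1,0) : = -1
      linear_combination (-1 : ℂ)*hcC + (c:ℂ)^2*(2*(s:ℂ) + (zi:ℂ)*Complex.I + (zr:ℂ))*hs2C +
        (c:ℂ)^2*(-2*(a:ℂ)*(d:ℂ)*(s:ℂ) - (zi:ℂ)*(a:ℂ)*(d:ℂ)*Complex.I + 2*(zi:ℂ)^2*(s:ℂ) +
          (zi:ℂ)^3*Complex.I - (zr:ℂ)*(a:ℂ)*(d:ℂ) + (zr:ℂ)*(zi:ℂ)^2)*hI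
    · -- (1,1) : = 0
      linear_combination (c:ℂ)^2*((d:ℂ)*Complex.I)*hs2C +
        (c:ℂ)^2*(-(a:ℂ)*(d:ℂ)^2*Complex.I + (zi:ℂ)^2*(d:ℂ)*Complex.I)*hI
end

section
/- For every real E, every x ∈ ℝ, and every α ∈ ℝ, one has L^{E,d}(x)* S_d L^{E,d}(x) = S_d and A^{E,d}(x)* S_d A^{E,d}(x) = S_d. -/
open scoped BigOperators Matrix

/-- The horizontal strip `S_h = {z : |Im z| < h}`. -/
def strip (h : ℝ) : Set ℂ := {z : ℂ | |z.im| < h}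

/-- Identification `Fin d ⊕ Fin d ≃ Fin (2d)`. -/
def sumEquiv (d : ℕ) : Fin d ⊕ Fin d ≃ Fin (2 * d) :=
  finSumFinEquiv.trans (finCongr (by omega))

/-- The upper-triangular matrix `C_d` with `(C_d)_{ij} = v̂_{d-(j-i)}` for `j ≥ i`. -/
noncomputable def Cdmat (d : ℕ) (vhat : ℤ → ℂ) : Matrix (Fin d) (Fin d) ℂ :=
  Matrix.of fun i j => if (i : ℕ) ≤ (j : ℕ) then vhat ((d : ℤ) - ((j : ℤ) - (i : ℤ))) else 0

/-- The structure matrix `S_d = (0, -C_d*; C_d, 0)`. -/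
noncomputable def Smat (d : ℕ) (vhat : ℤ → ℂ) : Matrix (Fin (2 * d)) (Fin (2 * d)) ℂ :=
  Matrix.reindex (sumEquiv d) (sumEquiv d)
    (Matrix.fromBlocks 0 (-(Cdmat d vhat)ᴴ) (Cdmat d vhat) 0)

/-- The standard symplectic matrix `𝒥_{2d} = (0, I_d; -I_d, 0)`. -/
noncomputable def Jmat (d : ℕ) : Matrix (Fin (2 * d)) (Fin (2 * d)) ℂ :=
  Matrix.reindex (sumEquiv d) (sumEquiv d) (Matrix.fromBlocks 0 1 (-1) 0)

/-- The long-range transfer matrix `L^{E,d}(z)`. -/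
noncomputable def Lmat (d : ℕ) (vhat : ℤ → ℂ) (E : ℂ) (z : ℂ) :
    Matrix (Fin (2 * d)) (Fin (2 * d)) ℂ :=
  Matrix.of fun r c =>
    if (r : ℕ) = 0 then
      (vhat d)⁻¹ *
        ((if (c : ℕ) = d - 1 then E - 2 * Complex.cos (2 * Real.pi * z) else 0)
          - vhat ((d : ℤ) - 1 - (c : ℤ)))
    else if (c : ℕ) + 1 = (r : ℕ) then 1 else 0

/-- The dual potential matrix `V_d(x)`. -/
noncomputable def Vdmat (d : ℕ) (vhat : ℤ → ℂ) (α x : ℝ) : Matrix (Fin d) (Fin d) ℂ :=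
  Matrix.of fun i j =>
    if i = j then 2 * Complex.cos (2 * Real.pi * ((x : ℂ) + (i : ℕ) * (α : ℂ)))
    else vhat ((i : ℤ) - (j : ℤ))

/-- The dual cocycle matrix `A^{E,d}(x) = (C_d⁻¹(E - V_d(x)), -C_d⁻¹C_d*; I, 0)`. -/
noncomputable def Amat (d : ℕ) (vhat : ℤ → ℂ) (α x : ℝ) (E : ℂ) :
    Matrix (Fin (2 * d)) (Fin (2 * d)) ℂ :=
  Matrix.reindex (sumEquiv d) (sumEquiv d)
    (Matrix.fromBlocks
      ((Cdmat d vhat)⁻¹ * (E • (1 : Matrix (Fin d) (Fin d) ℂ) - Vdmat d vhat α x))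
      (-((Cdmat d vhat)⁻¹ * (Cdmat d vhat)ᴴ))
      1 0)

/-! ### Auxiliary lemmas -/

lemma sumEquiv_symm_aux (d : ℕ) (p : Fin (2 * d)) :
    (sumEquiv d).symm p = if h : (p : ℕ) < d then Sum.inl ⟨p, h⟩
      else Sum.inr ⟨(p : ℕ) - d, by omega⟩ := by
  rw [Equiv.symm_apply_eq]
  split_ifs with h <;> refine Fin.ext ?_ <;> simp [sumEquiv] <;> omega

lemma Smat_apply (d : ℕ) (vhat : ℤ → ℂ) (p q : Fin (2 * d)) :
    Smat d vhat p q =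
      if (p : ℕ) < d ∧ d ≤ (q : ℕ) ∧ (q : ℕ) ≤ (p : ℕ) + d then
        -(starRingEnd ℂ) (vhat ((q : ℤ) - (p : ℤ)))
      else if d ≤ (p : ℕ) ∧ (q : ℕ) < d ∧ (p : ℕ) ≤ (q : ℕ) + d then vhat ((p : ℤ) - (q : ℤ))
      else 0 := by
  rw [Smat, Matrix.reindex_apply, Matrix.submatrix_apply, sumEquiv_symm_aux, sumEquiv_symm_aux]
  by_cases hp : (p : ℕ) < d <;> by_cases hq : (q : ℕ) < d
  · rw [dif_pos hp, dif_pos hq]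
    simp only [Matrix.fromBlocks_apply₁₁, Matrix.zero_apply]
    split_ifs <;> first | rfl | (exfalso; omega)
  · rw [dif_pos hp, dif_neg hq]
    simp only [Matrix.fromBlocks_apply₁₂, Matrix.neg_apply, Matrix.conjTranspose_apply,
      Cdmat, Matrix.of_apply]
    split_ifs <;>
      first
        | (exfalso; omega)
        | (simp only [star_zero, neg_zero])
        | (simp only [starRingEnd_apply]; congr 3; omega)
  · rw [dif_neg hp, dif_pos hq]
    simp only [Matrix.fromBlocks_apply₂₁, Cdmat, Matrix.of_apply]
    split_ifs <;>
      first
        | (exfalso; omega)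
        | rfl
        | (congr 1; omega)
  · rw [dif_neg hp, dif_neg hq]
    simp only [Matrix.fromBlocks_apply₂₂, Matrix.zero_apply]
    split_ifs <;> first | rfl | (exfalso; omega)

/-- The first row of `Lmat`. -/
noncomputable def Lrow (d : ℕ) (vhat : ℤ → ℂ) (E z : ℂ) (c : Fin (2 * d)) : ℂ :=
  (vhat d)⁻¹ *
    ((if (c : ℕ) = d - 1 then E - 2 * Complex.cos (2 * Real.pi * z) else 0)
      - vhat ((d : ℤ) - 1 - (c : ℤ)))

lemma Lmat_apply (d : ℕ) (vhat : ℤ → ℂ) (E z : ℂ) (r c : Fin (2 * d)) :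
    Lmat d vhat E z r c =
      if (r : ℕ) = 0 then Lrow d vhat E z c else if (c : ℕ) + 1 = (r : ℕ) then 1 else 0 := rfl

lemma sum_mul_Lmat (d : ℕ) (hd : 1 ≤ d) (vhat : ℤ → ℂ) (E z : ℂ)
    (f : Fin (2 * d) → ℂ) (q : Fin (2 * d)) :
    ∑ c, f c * Lmat d vhat E z c q =
      f ⟨0, by omega⟩ * Lrow d vhat E z q +
        (if h : (q : ℕ) + 1 < 2 * d then f ⟨(q : ℕ) + 1, h⟩ else 0) := by
  classical
  by_cases hq : (q : ℕ) + 1 < 2 * d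
  · rw [dif_pos hq]
    have hstep : ∀ c : Fin (2 * d), f c * Lmat d vhat E z c q =
        (if c = (⟨0, by omega⟩ : Fin (2 * d)) then f ⟨0, by omega⟩ * Lrow d vhat E z q else 0)
        + (if c = (⟨(q : ℕ) + 1, hq⟩ : Fin (2 * d)) then f ⟨(q : ℕ) + 1, hq⟩ else 0) := by
      intro c
      have hne : (⟨0, by omega⟩ : Fin (2 * d)) ≠ (⟨(q : ℕ) + 1, hq⟩ : Fin (2 * d)) :=
        by simp [Fin.ext_iff]
      by_cases hc0 : c = (⟨0, by omega⟩ : Fin (2 * d))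
      · rw [if_pos hc0, hc0, if_neg hne]
        rw [Lmat_apply, if_pos rfl]
        ring
      · by_cases hc1 : c = (⟨(q : ℕ) + 1, hq⟩ : Fin (2 * d))
        · rw [if_neg hc0, if_pos hc1, hc1, Lmat_apply]
          rw [if_neg (by simp), if_pos (by simp)]
          ring
        · rw [if_neg hc0, if_neg hc1, Lmat_apply]
          have h1 : (c : ℕ) ≠ 0 := fun h => hc0 (Fin.ext h)
          have h2 : (q : ℕ) + 1 ≠ (c : ℕ) := fun h => hc1 (Fin.ext h.symm)
          rw [if_neg h1, if_neg h2, mul_zero, add_zero]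
    rw [Finset.sum_congr rfl fun c _ => hstep c, Finset.sum_add_distrib,
      Finset.sum_ite_eq' Finset.univ, Finset.sum_ite_eq' Finset.univ]
    simp
  · rw [dif_neg hq]
    have hstep : ∀ c : Fin (2 * d), f c * Lmat d vhat E z c q =
        (if c = (⟨0, by omega⟩ : Fin (2 * d)) then f ⟨0, by omega⟩ * Lrow d vhat E z q
          else 0) := by
      intro c
      by_cases hc0 : c = (⟨0, by omega⟩ : Fin (2 * d))
      · rw [if_pos hc0, hc0]; simp [Lmat_apply]
      · rw [if_neg hc0, Lmat_apply]
        have h1 : (c : ℕ) ≠ 0 := fun h => hc0 (Fin.ext h)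
        have h2 : (q : ℕ) + 1 ≠ (c : ℕ) := fun h => by omega
        rw [if_neg h1, if_neg h2, mul_zero]
    rw [Finset.sum_congr rfl fun c _ => hstep c, Finset.sum_ite_eq' Finset.univ]
    simp

lemma sum_conjLmat_mul (d : ℕ) (hd : 1 ≤ d) (vhat : ℤ → ℂ) (E z : ℂ)
    (f : Fin (2 * d) → ℂ) (p : Fin (2 * d)) :
    ∑ r, (starRingEnd ℂ) (Lmat d vhat E z r p) * f r =
      (starRingEnd ℂ) (Lrow d vhat E z p) * f ⟨0, by omega⟩ +
        (if h : (p : ℕ) + 1 < 2 * d then f ⟨(p : ℕ) + 1, h⟩ else 0) := by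
  classical
  by_cases hp : (p : ℕ) + 1 < 2 * d
  · rw [dif_pos hp]
    have hstep : ∀ r : Fin (2 * d), (starRingEnd ℂ) (Lmat d vhat E z r p) * f r =
        (if r = (⟨0, by omega⟩ : Fin (2 * d)) then
          (starRingEnd ℂ) (Lrow d vhat E z p) * f ⟨0, by omega⟩ else 0)
        + (if r = (⟨(p : ℕ) + 1, hp⟩ : Fin (2 * d)) then f ⟨(p : ℕ) + 1, hp⟩ else 0) := by
      intro r
      have hne : (⟨0, by omega⟩ : Fin (2 * d)) ≠ (⟨(p : ℕ) + 1, hp⟩ : Fin (2 * d)) :=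
        by simp [Fin.ext_iff]
      by_cases hr0 : r = (⟨0, by omega⟩ : Fin (2 * d))
      · rw [if_pos hr0, hr0, if_neg hne]
        rw [Lmat_apply, if_pos rfl]
        ring
      · by_cases hr1 : r = (⟨(p : ℕ) + 1, hp⟩ : Fin (2 * d))
        · rw [if_neg hr0, if_pos hr1, hr1, Lmat_apply]
          rw [if_neg (by simp), if_pos (by simp)]
          simp
        · rw [if_neg hr0, if_neg hr1, Lmat_apply]
          have h1 : (r : ℕ) ≠ 0 := fun h => hr0 (Fin.ext h)
          have h2 : (p : ℕ) + 1 ≠ (r : ℕ) := fun h => hr1 (Fin.ext h.symm)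
          rw [if_neg h1, if_neg h2, map_zero, zero_mul, add_zero]
    rw [Finset.sum_congr rfl fun r _ => hstep r, Finset.sum_add_distrib,
      Finset.sum_ite_eq' Finset.univ, Finset.sum_ite_eq' Finset.univ]
    simp
  · rw [dif_neg hp]
    have hstep : ∀ r : Fin (2 * d), (starRingEnd ℂ) (Lmat d vhat E z r p) * f r =
        (if r = (⟨0, by omega⟩ : Fin (2 * d)) then
          (starRingEnd ℂ) (Lrow d vhat E z p) * f ⟨0, by omega⟩ else 0) := by
      intro r
      by_cases hr0 : r = (⟨0, by omega⟩ : Fin (2 * d))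
      · rw [if_pos hr0, hr0]; simp [Lmat_apply]
      · rw [if_neg hr0, Lmat_apply]
        have h1 : (r : ℕ) ≠ 0 := fun h => hr0 (Fin.ext h)
        have h2 : (p : ℕ) + 1 ≠ (r : ℕ) := fun h => by omega
        rw [if_neg h1, if_neg h2, map_zero, zero_mul]
    rw [Finset.sum_congr rfl fun r _ => hstep r, Finset.sum_ite_eq' Finset.univ]
    simp

lemma Cdmat_det_isUnit (d : ℕ) (vhat : ℤ → ℂ) (hvd : vhat (d : ℤ) ≠ 0) :
    IsUnit (Cdmat d vhat).det := by
  have htri : (Cdmat d vhat).BlockTriangular id := by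
    intro i j hij
    simp only [Cdmat, Matrix.of_apply]
    rw [if_neg]
    simp only [id_eq] at hij
    have := (Fin.lt_def.mp hij)
    omega
  rw [Matrix.det_of_upperTriangular htri]
  have hdiag : ∀ i : Fin d, Cdmat d vhat i i = vhat (d : ℤ) := by
    intro i
    simp only [Cdmat, Matrix.of_apply, if_pos (le_refl _)]
    congr 1
    ring
  rw [Finset.prod_congr rfl fun i _ => hdiag i, Finset.prod_const]
  exact isUnit_iff_ne_zero.mpr (pow_ne_zero _ hvd)

lemma Vdmat_herm (d : ℕ) (vhat : ℤ → ℂ) (hv : ∀ k : ℤ, vhat (-k) = starRingEnd ℂ (vhat k))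
    (α x : ℝ) : (Vdmat d vhat α x)ᴴ = Vdmat d vhat α x := by
  ext i j
  simp only [Matrix.conjTranspose_apply, Vdmat, Matrix.of_apply]
  by_cases hij : i = j
  · subst hij
    simp only [if_pos rfl]
    simp [Complex.star_def, ← Complex.cos_conj, map_mul, map_add, map_ofNat, Complex.conj_ofReal]
  · rw [if_neg (fun h => hij h.symm), if_neg hij, Complex.star_def, ← hv]
    congr 1
    ring

lemma Apart (d : ℕ) (hd : 1 ≤ d) (vhat : ℤ → ℂ)
    (hv : ∀ k : ℤ, vhat (-k) = starRingEnd ℂ (vhat k)) (hvd : vhat (d : ℤ) ≠ 0)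
    (E x α : ℝ) :
    (Amat d vhat α x (E : ℂ))ᴴ * Smat d vhat * Amat d vhat α x (E : ℂ) = Smat d vhat := by
  set C := Cdmat d vhat with hC
  set V := Vdmat d vhat α x with hVdef
  have hU : IsUnit C.det := Cdmat_det_isUnit d vhat hvd
  have hCC : C * C⁻¹ = 1 := Matrix.mul_nonsing_inv _ hU
  set B := C⁻¹ * ((E : ℂ) • (1 : Matrix (Fin d) (Fin d) ℂ) - V) with hBdef
  have hCB : C * B = (E : ℂ) • (1 : Matrix (Fin d) (Fin d) ℂ) - V := by
    rw [hBdef, ← Matrix.mul_assoc, hCC, Matrix.one_mul]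
  have hVh : Vᴴ = V := by rw [hVdef]; exact Vdmat_herm d vhat hv α x
  have hEV : ((E : ℂ) • (1 : Matrix (Fin d) (Fin d) ℂ) - V)ᴴ
      = (E : ℂ) • (1 : Matrix (Fin d) (Fin d) ℂ) - V := by
    rw [Matrix.conjTranspose_sub, Matrix.conjTranspose_smul, Matrix.conjTranspose_one,
      hVh, Complex.star_def, Complex.conj_ofReal]
  have key : (Matrix.fromBlocks B (-(C⁻¹ * Cᴴ)) 1 0)ᴴ
      * Matrix.fromBlocks 0 (-Cᴴ) C 0 * Matrix.fromBlocks B (-(C⁻¹ * Cᴴ)) 1 0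
      = Matrix.fromBlocks 0 (-Cᴴ) C 0 := by
    rw [Matrix.fromBlocks_conjTranspose, Matrix.fromBlocks_multiply, Matrix.fromBlocks_multiply]
    have h1 : Bᴴ * 0 + (1 : Matrix (Fin d) (Fin d) ℂ)ᴴ * C = C := by
      simp
    have hTL : (Bᴴ * 0 + (1 : Matrix (Fin d) (Fin d) ℂ)ᴴ * C) * B
        + (Bᴴ * -Cᴴ + (1 : Matrix (Fin d) (Fin d) ℂ)ᴴ * 0) * 1 = 0 := by
      simp only [Matrix.mul_zero, zero_add, add_zero, Matrix.conjTranspose_one,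
        Matrix.one_mul, Matrix.mul_one, Matrix.mul_neg]
      have : Bᴴ * Cᴴ = (C * B)ᴴ := (Matrix.conjTranspose_mul C B).symm
      rw [this, hCB, hEV]
      abel
    have hTR : (Bᴴ * 0 + (1 : Matrix (Fin d) (Fin d) ℂ)ᴴ * C) * -(C⁻¹ * Cᴴ)
        + (Bᴴ * -Cᴴ + (1 : Matrix (Fin d) (Fin d) ℂ)ᴴ * 0) * 0 = -Cᴴ := by
      simp only [Matrix.mul_zero, zero_add, add_zero, Matrix.conjTranspose_one,
        Matrix.one_mul, Matrix.mul_neg]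
      rw [← Matrix.mul_assoc, hCC, Matrix.one_mul]
    have hBL : ((-(C⁻¹ * Cᴴ))ᴴ * 0 + 0ᴴ * C) * B
        + ((-(C⁻¹ * Cᴴ))ᴴ * -Cᴴ + 0ᴴ * 0) * 1 = C := by
      simp only [Matrix.mul_zero, zero_add, add_zero, Matrix.conjTranspose_zero,
        Matrix.zero_mul, Matrix.mul_one, Matrix.conjTranspose_neg, Matrix.neg_mul,
        Matrix.mul_neg, neg_neg, Matrix.conjTranspose_mul, Matrix.conjTranspose_conjTranspose]
      rw [Matrix.mul_assoc, ← Matrix.conjTranspose_mul, hCC]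
      simp
    have hBR : ((-(C⁻¹ * Cᴴ))ᴴ * 0 + 0ᴴ * C) * -(C⁻¹ * Cᴴ)
        + ((-(C⁻¹ * Cᴴ))ᴴ * -Cᴴ + 0ᴴ * 0) * 0 = 0 := by
      simp
    rw [hTL, hTR, hBL, hBR]
  show (Amat d vhat α x (E : ℂ))ᴴ * Smat d vhat * Amat d vhat α x (E : ℂ) = Smat d vhat
  rw [Amat, Smat, Matrix.reindex_apply, Matrix.reindex_apply]
  rw [Matrix.conjTranspose_submatrix, Matrix.submatrix_mul_equiv, Matrix.submatrix_mul_equiv]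
  rw [← hC, ← hVdef, ← hBdef]
  exact congrArg (fun M => M.submatrix (sumEquiv d).symm (sumEquiv d).symm) key

lemma Smat_row0 (d : ℕ) (hd : 1 ≤ d) (vhat : ℤ → ℂ) (c : Fin (2 * d)) :
    Smat d vhat ⟨0, by omega⟩ c
      = if (c : ℕ) = d then -(starRingEnd ℂ) (vhat (d : ℤ)) else 0 := by
  rw [Smat_apply]
  split_ifs <;>
    first
      | rfl
      | (exfalso; simp only [Fin.val_mk] at *; omega)
      | (simp only [starRingEnd_apply]; congr 3; simp only [Fin.val_mk] at *; omega)

lemma Smat_col0 (d : ℕ) (hd : 1 ≤ d) (vhat : ℤ → ℂ) (r : Fin (2 * d)) :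
    Smat d vhat r ⟨0, by omega⟩ = if (r : ℕ) = d then vhat (d : ℤ) else 0 := by
  rw [Smat_apply]
  split_ifs <;>
    first
      | rfl
      | (exfalso; simp only [Fin.val_mk] at *; omega)
      | (congr 1; simp only [Fin.val_mk] at *; omega)

lemma Lpart (d : ℕ) (hd : 1 ≤ d) (vhat : ℤ → ℂ)
    (hv : ∀ k : ℤ, vhat (-k) = starRingEnd ℂ (vhat k)) (hvd : vhat (d : ℤ) ≠ 0)
    (E x : ℝ) :
    (Lmat d vhat (E : ℂ) (x : ℂ))ᴴ * Smat d vhat * Lmat d vhat (E : ℂ) (x : ℂ)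
      = Smat d vhat := by
  have hconj : ∀ k : ℤ, (starRingEnd ℂ) (vhat k) = vhat (-k) := fun k => (hv k).symm
  have hvnd : vhat (-(d : ℤ)) ≠ 0 := by
    rw [hv]
    exact fun h => hvd (by simpa using congrArg (starRingEnd ℂ) h)
  have ha : (starRingEnd ℂ) ((E : ℂ) - 2 * Complex.cos (2 * Real.pi * (x : ℂ)))
      = (E : ℂ) - 2 * Complex.cos (2 * Real.pi * (x : ℂ)) := by
    simp [map_sub, map_mul, map_ofNat, ← Complex.cos_conj, Complex.conj_ofReal]
  ext p q
  rw [Matrix.mul_apply]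
  rw [sum_mul_Lmat d hd vhat (E : ℂ) (x : ℂ)
    (((Lmat d vhat (E : ℂ) (x : ℂ))ᴴ * Smat d vhat) p) q]
  have hLS : ∀ c : Fin (2 * d), ((Lmat d vhat (E : ℂ) (x : ℂ))ᴴ * Smat d vhat) p c
      = (starRingEnd ℂ) (Lrow d vhat (E : ℂ) (x : ℂ) p) * Smat d vhat ⟨0, by omega⟩ c
        + (if h : (p : ℕ) + 1 < 2 * d then Smat d vhat ⟨(p : ℕ) + 1, h⟩ c else 0) := by
    intro c
    rw [Matrix.mul_apply]
    simp only [Matrix.conjTranspose_apply, Complex.star_def]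
    exact sum_conjLmat_mul d hd vhat (E : ℂ) (x : ℂ) (fun r => Smat d vhat r c) p
  simp only [hLS]
  rw [Smat_row0 d hd, if_neg (by simp only [Fin.val_mk]; omega : ¬((⟨0, by omega⟩ : Fin (2 * d)) : ℕ) = d), mul_zero,
    zero_add]
  by_cases hn : (p : ℕ) + 1 = d <;> by_cases hm : (q : ℕ) + 1 = d
  · -- p = d-1, q = d-1
    have hp1 : (p : ℕ) + 1 < 2 * d := by omega
    have hq1 : (q : ℕ) + 1 < 2 * d := by omega
    rw [dif_pos hp1, dif_pos hq1, dif_pos hp1]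
    rw [Smat_col0 d hd, if_pos hn, Smat_row0 d hd, if_pos hm]
    have hSz : Smat d vhat ⟨(p : ℕ) + 1, hp1⟩ ⟨(q : ℕ) + 1, hq1⟩ = 0 := by
      rw [Smat_apply, if_neg (by simp only [Fin.val_mk]; omega), if_neg (by simp only [Fin.val_mk]; omega)]
    have hSpq : Smat d vhat p q = 0 := by
      rw [Smat_apply, if_neg (by omega), if_neg (by omega)]
    rw [hSz, hSpq, Lrow, Lrow, if_pos (by omega : (q : ℕ) = d - 1),
      if_pos (by omega : (p : ℕ) = d - 1),
      show (d : ℤ) - 1 - ((q : ℕ) : ℤ) = 0 from by omega,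
      show (d : ℤ) - 1 - ((p : ℕ) : ℤ) = 0 from by omega]
    simp only [map_mul, map_sub, map_inv₀, hconj, Complex.conj_ofReal, map_ofNat,
      ← Complex.cos_conj, ha, neg_zero]
    field_simp [hvd, hvnd]
    ring
  · -- p = d-1, q ≠ d-1
    have hp1 : (p : ℕ) + 1 < 2 * d := by omega
    have hpz : (((p : ℕ) : ℤ)) = (d : ℤ) - 1 := by omega
    by_cases hq1 : (q : ℕ) + 1 < 2 * d
    · rw [dif_pos hp1, Smat_col0 d hd, if_pos hn, dif_pos hq1, Smat_row0 d hd,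
        if_neg (show ¬((⟨(q : ℕ) + 1, hq1⟩ : Fin (2 * d)) : ℕ) = d from by
          simp only [Fin.val_mk]; omega),
        mul_zero, zero_add, dif_pos hp1, Lrow,
        if_neg (show ¬(q : ℕ) = d - 1 from by omega), Smat_apply, Smat_apply]
      split_ifs <;>
        first
          | rfl
          | (exfalso; simp only [Fin.val_mk] at *; omega)
          | (simp only [map_mul, map_sub, map_inv₀, map_zero, neg_neg, neg_zero, hconj,
              Fin.val_mk]; push_cast; try simp only [hpz]
             ring_nf; try field_simp [hvd, hvnd]; try ring)
    · rw [dif_neg hq1, dif_pos hp1, Smat_col0 d hd, if_pos hn, add_zero, Lrow,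
        if_neg (show ¬(q : ℕ) = d - 1 from by omega), Smat_apply]
      split_ifs <;>
        first
          | rfl
          | (exfalso; (try simp only [Fin.val_mk] at *); omega)
          | (simp only [map_mul, map_sub, map_inv₀, map_zero, neg_neg, neg_zero, hconj,
              Fin.val_mk]; push_cast; try simp only [hpz]
             ring_nf; try field_simp [hvd, hvnd]; try ring)
  · -- p ≠ d-1, q = d-1
    have hq1 : (q : ℕ) + 1 < 2 * d := by omega
    have hqz : (((q : ℕ) : ℤ)) = (d : ℤ) - 1 := by omega
    by_cases hp1 : (p : ℕ) + 1 < 2 * d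
    · rw [dif_pos hp1, Smat_col0 d hd,
        if_neg (show ¬((⟨(p : ℕ) + 1, hp1⟩ : Fin (2 * d)) : ℕ) = d from by
          simp only [Fin.val_mk]; omega),
        zero_mul, zero_add, dif_pos hq1, Smat_row0 d hd, if_pos hm, dif_pos hp1, Lrow,
        if_neg (show ¬(p : ℕ) = d - 1 from by omega), Smat_apply, Smat_apply]
      split_ifs <;>
        first
          | rfl
          | (exfalso; simp only [Fin.val_mk] at *; omega)
          | (simp only [map_mul, map_sub, map_inv₀, map_zero, neg_neg, neg_zero, hconj,
              Fin.val_mk]; push_cast; try simp only [hqz]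
             ring_nf; try field_simp [hvd, hvnd]; try ring)
    · rw [dif_neg hp1, zero_mul, zero_add, dif_pos hq1, Smat_row0 d hd, if_pos hm,
        dif_neg hp1, add_zero, Lrow,
        if_neg (show ¬(p : ℕ) = d - 1 from by omega), Smat_apply]
      split_ifs <;>
        first
          | rfl
          | (exfalso; (try simp only [Fin.val_mk] at *); omega)
          | (simp only [map_mul, map_sub, map_inv₀, map_zero, neg_neg, neg_zero, hconj,
              Fin.val_mk]; push_cast; try simp only [hqz]
             ring_nf; try field_simp [hvd, hvnd]; try ring)
  · -- p ≠ d-1, q ≠ d-1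
    by_cases hp1 : (p : ℕ) + 1 < 2 * d <;> by_cases hq1 : (q : ℕ) + 1 < 2 * d
    · rw [dif_pos hp1, Smat_col0 d hd,
        if_neg (show ¬((⟨(p : ℕ) + 1, hp1⟩ : Fin (2 * d)) : ℕ) = d from by
          simp only [Fin.val_mk]; omega),
        zero_mul, zero_add, dif_pos hq1, Smat_row0 d hd,
        if_neg (show ¬((⟨(q : ℕ) + 1, hq1⟩ : Fin (2 * d)) : ℕ) = d from by
          simp only [Fin.val_mk]; omega),
        mul_zero, zero_add, dif_pos hp1, Smat_apply, Smat_apply]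
      split_ifs <;>
        first
          | rfl
          | (exfalso; simp only [Fin.val_mk] at *; omega)
          | (simp only [map_mul, map_sub, map_inv₀, map_zero, neg_neg, neg_zero, hconj,
              Fin.val_mk]; push_cast; ring_nf; try field_simp [hvd, hvnd]; try ring)
    · rw [dif_pos hp1, Smat_col0 d hd,
        if_neg (show ¬((⟨(p : ℕ) + 1, hp1⟩ : Fin (2 * d)) : ℕ) = d from by
          simp only [Fin.val_mk]; omega),
        zero_mul, zero_add, dif_neg hq1, Smat_apply]
      split_ifs <;> first | rfl | (exfalso; (try simp only [Fin.val_mk] at *); omega)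
    · rw [dif_neg hp1, zero_mul, zero_add, dif_pos hq1, Smat_row0 d hd,
        if_neg (show ¬((⟨(q : ℕ) + 1, hq1⟩ : Fin (2 * d)) : ℕ) = d from by
          simp only [Fin.val_mk]; omega),
        mul_zero, zero_add, dif_neg hp1, Smat_apply]
      split_ifs <;> first | rfl | (exfalso; (try simp only [Fin.val_mk] at *); omega)
    · rw [dif_neg hp1, zero_mul, zero_add, dif_neg hq1, Smat_apply]
      split_ifs <;> first | rfl | (exfalso; (try simp only [Fin.val_mk] at *); omega)

/-- Symplecticity of the long-range cocycle: `L^{E,d}(x)* S_d L^{E,d}(x) = S_d` and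
`A^{E,d}(x)* S_d A^{E,d}(x) = S_d` for all real `E, x, α`. -/
theorem longrange_cocycle_symplectic
    (d : ℕ) (hd : 1 ≤ d)
    (vhat : ℤ → ℂ) (hv : ∀ k : ℤ, vhat (-k) = starRingEnd ℂ (vhat k))
    (hvd : vhat (d : ℤ) ≠ 0) :
    ∀ E x α : ℝ,
      (Lmat d vhat (E : ℂ) (x : ℂ))ᴴ * Smat d vhat * Lmat d vhat (E : ℂ) (x : ℂ)
        = Smat d vhat ∧
      (Amat d vhat α x (E : ℂ))ᴴ * Smat d vhat * Amat d vhat α x (E : ℂ)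
        = Smat d vhat := by
  intro E x α
  exact ⟨Lpart d hd vhat hv hvd E x, Apart d hd vhat hv hvd E x α⟩
end

section
/- Let I ⊆ ℝ be an interval and let A : I × ℝ → M_{2d}(ℂ), (t,x) ↦ A^t(x), be 1-periodic in x, C¹ in t, with A^t(x) ∈ HSp(2d) for all (t,x), and monotonic: for every (t,x) ∈ I × ℝ and every nonzero isotropic v ∈ ℂ^{2d}, the number v* A^t(x)* 𝒥_{2d} ∂_tA^t(x) v is a positive real. Fix t ∈ I, α, x ∈ ℝ, a Lagrangian frame Λ ∈ ℂ^{2d×d}, and an integer k ≥ 1; set Λ₀ = Λ and Λ_j = A^t(x+(j−1)α)·Λ_{j−1} for 1 ≤ j ≤ k. Then the matrix ℳ = Σ_{j=1}^{k} Λ_{j−1}* (A^t(x+(j−1)α)* 𝒥_{2d} ∂_tA^t(x+(j−1)α)) Λ_{j−1} is Hermitian positive definite; moreover, writing Λ_k = (X; Y) in d×d blocks, the matrix X − iY is invertible and Ω = −2·((X−iY)^{-1})* ℳ (X−iY)^{-1} is negative definite, so in particular tr Ω < 0. -/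
open scoped BigOperators Matrix ComplexOrder

/-- Entrywise `t`-derivative within the parameter interval `I` of a two-parameter
matrix family. -/
noncomputable def matDerivT {m n : ℕ} (I : Set ℝ)
    (A : ℝ → ℝ → Matrix (Fin m) (Fin n) ℂ) (t x : ℝ) : Matrix (Fin m) (Fin n) ℂ :=
  Matrix.of fun i j => derivWithin (fun s => A s x i j) I t

section Aux

open Matrix

/-- Compression of a quadratic form. -/
lemma qform_helper {m n : ℕ} (M : Matrix (Fin m) (Fin n) ℂ)
    (N : Matrix (Fin m) (Fin m) ℂ) (u : Fin n → ℂ) :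
    star u ⬝ᵥ (Mᴴ * N * M) *ᵥ u = star (M *ᵥ u) ⬝ᵥ N *ᵥ (M *ᵥ u) := by
  simp only [star_mulVec, mulVec_mulVec, dotProduct_mulVec, vecMul_vecMul,
    Matrix.mul_assoc]

lemma qform_sum {n : ℕ} {ι : Type*} (s : Finset ι)
    (M : ι → Matrix (Fin n) (Fin n) ℂ) (u : Fin n → ℂ) :
    star u ⬝ᵥ (∑ j ∈ s, M j) *ᵥ u = ∑ j ∈ s, star u ⬝ᵥ (M j) *ᵥ u := by
  classical
  induction s using Finset.induction with
  | empty => simp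
  | insert _ _ h ih =>
      rw [Finset.sum_insert h, Finset.sum_insert h, Matrix.add_mulVec,
        dotProduct_add, ih]

lemma star_single {n : ℕ} (i : Fin n) :
    star ((Pi.single i 1 : Fin n → ℂ)) = (Pi.single i 1 : Fin n → ℂ) := by
  funext p
  by_cases hp : p = i <;> simp [Pi.single_apply, hp]

lemma single_qform {n : ℕ} (M : Matrix (Fin n) (Fin n) ℂ) (i j : Fin n) :
    star ((Pi.single i 1 : Fin n → ℂ)) ⬝ᵥ M *ᵥ (Pi.single j 1 : Fin n → ℂ) = M i j := by
  rw [star_single, single_dotProduct, mulVec_single]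
  simp

/-- Polarization: a complex matrix with real quadratic form is Hermitian. -/
lemma isHermitian_of_im_qform {n : ℕ} (M : Matrix (Fin n) (Fin n) ℂ)
    (h : ∀ u : Fin n → ℂ, (star u ⬝ᵥ M *ᵥ u).im = 0) : M.IsHermitian := by
  show Mᴴ = M
  ext i j
  rw [Matrix.conjTranspose_apply]
  have e1 : (M i i).im = 0 := by simpa only [single_qform] using h (Pi.single i 1)
  have e2 : (M j j).im = 0 := by simpa only [single_qform] using h (Pi.single j 1)
  have e3 := h ((Pi.single i 1 : Fin n → ℂ) + (Pi.single j 1 : Fin n → ℂ))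
  have e4 := h ((Pi.single i 1 : Fin n → ℂ) + Complex.I • (Pi.single j 1 : Fin n → ℂ))
  simp only [star_add, star_smul, Matrix.mulVec_add, Matrix.mulVec_smul,
    add_dotProduct, dotProduct_add, smul_dotProduct, dotProduct_smul,
    single_qform, smul_eq_mul, Complex.star_def, Complex.conj_I] at e3 e4
  have E1 := Complex.conj_eq_iff_im.mpr e1
  have E2 := Complex.conj_eq_iff_im.mpr e2
  have E3 := Complex.conj_eq_iff_im.mpr e3
  have E4 := Complex.conj_eq_iff_im.mpr e4
  simp only [map_add, _root_.map_mul, map_neg, Complex.conj_I] at E3 E4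
  rw [Complex.star_def]
  linear_combination E3 / 2 - Complex.I * E4 / 2 + (Complex.I - 1) / 2 * E1 -
    (1 + Complex.I ^ 3) / 2 * E2 +
    ((starRingEnd ℂ) (M j i) - (starRingEnd ℂ) (M i j) - M i j + M j i) / 2 *
      Complex.I_mul_I

end Aux

/-- Monotonicity of the iterated cocycle along Lagrangian frames: for a monotonic
`C¹` family of Hermitian-symplectic cocycles, the compressed Krein form `ℳ` of any
`k`-fold iterate along a Lagrangian frame is positive definite, `X - iY` is invertible
(where `(X; Y)` are the `d×d` blocks of the iterated frame `Λ_k`), and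
`Ω = -2((X-iY)⁻¹)* ℳ (X-iY)⁻¹` is negative definite, so `tr Ω < 0`. -/
theorem monotonic_cocycle_compressed_form_posdef
    (d : ℕ) (hd : 1 ≤ d)
    (I : Set ℝ) (hIconn : I.OrdConnected) (hIne : I.Nonempty)
    (A : ℝ → ℝ → Matrix (Fin (2 * d)) (Fin (2 * d)) ℂ)
    (hper : ∀ t ∈ I, ∀ x : ℝ, A t (x + 1) = A t x)
    (hC1 : ∀ (x : ℝ) (i l : Fin (2 * d)), ContDiffOn ℝ 1 (fun s => A s x i l) I)
    (hsymp : ∀ t ∈ I, ∀ x : ℝ, (A t x)ᴴ * Jmat d * A t x = Jmat d)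
    (hmono : ∀ t ∈ I, ∀ x : ℝ, ∀ v : Fin (2 * d) → ℂ, v ≠ 0 →
      star v ⬝ᵥ (Jmat d).mulVec v = 0 →
      (star v ⬝ᵥ (((A t x)ᴴ * Jmat d * matDerivT I A t x).mulVec v)).im = 0 ∧
      0 < (star v ⬝ᵥ (((A t x)ᴴ * Jmat d * matDerivT I A t x).mulVec v)).re)
    (t : ℝ) (ht : t ∈ I) (α x : ℝ)
    (Λ : Matrix (Fin (2 * d)) (Fin d) ℂ)
    (hrank : Λ.rank = d) (hLag : Λᴴ * Jmat d * Λ = 0)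
    (k : ℕ) (hk : 1 ≤ k)
    (Λseq : ℕ → Matrix (Fin (2 * d)) (Fin d) ℂ)
    (hΛ0 : Λseq 0 = Λ)
    (hΛs : ∀ j : ℕ, Λseq (j + 1) = A t (x + (j : ℝ) * α) * Λseq j)
    (ℳ : Matrix (Fin d) (Fin d) ℂ)
    (hℳ : ℳ = ∑ j ∈ Finset.range k,
      (Λseq j)ᴴ *
        ((A t (x + (j : ℝ) * α))ᴴ * Jmat d * matDerivT I A t (x + (j : ℝ) * α)) *
        Λseq j)
    (X Y : Matrix (Fin d) (Fin d) ℂ)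
    (hX : X = Matrix.of fun (i : Fin d) (j : Fin d) =>
      Λseq k (Fin.cast (by omega) (Fin.castAdd d i)) j)
    (hY : Y = Matrix.of fun (i : Fin d) (j : Fin d) =>
      Λseq k (Fin.cast (by omega) (Fin.natAdd d i)) j)
    (Ω : Matrix (Fin d) (Fin d) ℂ)
    (hΩ : Ω = (-2 : ℂ) •
      (((X - Complex.I • Y)⁻¹)ᴴ * ℳ * (X - Complex.I • Y)⁻¹)) :
    ℳ.PosDef ∧
    IsUnit (X - Complex.I • Y) ∧
    (-Ω).PosDef ∧
    Ω.trace.im = 0 ∧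
    Ω.trace.re < 0 := by
  classical
  set e := sumEquiv d with he
  -- J squared is -1, hence J is invertible
  have hBB : (Matrix.fromBlocks 0 1 (-1) 0 :
      Matrix (Fin d ⊕ Fin d) (Fin d ⊕ Fin d) ℂ) * Matrix.fromBlocks 0 1 (-1) 0 = -1 := by
    rw [Matrix.fromBlocks_multiply]
    ext (i | i) (j | j) <;>
      simp [Matrix.one_apply, Sum.inl.injEq, Sum.inr.injEq]
  have hJJ : Jmat d * Jmat d = -1 := by
    rw [Jmat, Matrix.reindex_apply, Matrix.submatrix_mul_equiv, hBB]
    ext i j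
    simp [Matrix.one_apply]
  have hJu : IsUnit (Jmat d) := by
    rw [Matrix.isUnit_iff_isUnit_det]
    have h5 : IsUnit ((-1 : Matrix (Fin (2 * d)) (Fin (2 * d)) ℂ).det) := by
      rw [Matrix.det_neg, Matrix.det_one, mul_one]
      exact isUnit_one.neg.pow _
    have h6 : (Jmat d).det * (Jmat d).det = (-1 : Matrix (Fin (2 * d)) (Fin (2 * d)) ℂ).det := by
      rw [← Matrix.det_mul, hJJ]
    rw [← h6] at h5
    exact isUnit_of_mul_isUnit_left h5
  -- each A t y is invertible
  have hAunit : ∀ y : ℝ, IsUnit (A t y) := by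
    intro y
    have h := congrArg Matrix.det (hsymp t ht y)
    rw [Matrix.det_mul, Matrix.det_mul] at h
    have hJdet : IsUnit (Jmat d).det := (Matrix.isUnit_iff_isUnit_det _).mp hJu
    rw [← h] at hJdet
    exact (Matrix.isUnit_iff_isUnit_det _).mpr (isUnit_of_mul_isUnit_right hJdet)
  -- Λseq j is Lagrangian with trivial kernel
  have hΛ0ker : ∀ v : Fin d → ℂ, Λ *ᵥ v = 0 → v = 0 := by
    have hfd : Module.finrank ℂ (LinearMap.ker Λ.mulVecLin) = 0 := by
      have h2 := LinearMap.finrank_range_add_finrank_ker Λ.mulVecLin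
      have h3 : Module.finrank ℂ (Fin d → ℂ) = d := by
        simp [Module.finrank_fintype_fun_eq_card]
      rw [h3] at h2
      have h4 : Module.finrank ℂ (LinearMap.range Λ.mulVecLin) = d := hrank
      omega
    have hker : LinearMap.ker Λ.mulVecLin = ⊥ := Submodule.finrank_eq_zero.mp hfd
    exact Matrix.ker_mulVecLin_eq_bot_iff.mp hker
  have hfacts : ∀ j : ℕ, (Λseq j)ᴴ * Jmat d * Λseq j = 0 ∧
      (∀ v : Fin d → ℂ, Λseq j *ᵥ v = 0 → v = 0) := by
    intro j
    induction j with
    | zero => exact ⟨by rw [hΛ0]; exact hLag, by rw [hΛ0]; exact hΛ0ker⟩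
    | succ j ih =>
        constructor
        · have key : (Λseq (j + 1))ᴴ * Jmat d * Λseq (j + 1) =
              (Λseq j)ᴴ * ((A t (x + (j : ℝ) * α))ᴴ * Jmat d * A t (x + (j : ℝ) * α)) *
                Λseq j := by
            rw [hΛs j]
            simp only [Matrix.conjTranspose_mul, Matrix.mul_assoc]
          rw [key, hsymp t ht, ih.1]
        · intro v hv
          rw [hΛs j] at hv
          have hA := hAunit (x + (j : ℝ) * α)
          have hAdet : IsUnit (A t (x + (j : ℝ) * α)).det :=
            (Matrix.isUnit_iff_isUnit_det _).mp hA
          apply ih.2 v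
          have : (A t (x + (j : ℝ) * α))⁻¹ *ᵥ ((A t (x + (j : ℝ) * α) * Λseq j) *ᵥ v)
              = 0 := by rw [hv, Matrix.mulVec_zero]
          rwa [Matrix.mulVec_mulVec, ← Matrix.mul_assoc, Matrix.nonsing_inv_mul _ hAdet,
            Matrix.one_mul] at this
  -- nonzero images are isotropic, so each term of ℳ has a positive real quadratic form
  have hterm : ∀ (j : ℕ) (u : Fin d → ℂ), u ≠ 0 →
      (star u ⬝ᵥ ((Λseq j)ᴴ *
        ((A t (x + (j : ℝ) * α))ᴴ * Jmat d * matDerivT I A t (x + (j : ℝ) * α)) *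
        Λseq j) *ᵥ u).im = 0 ∧
      0 < (star u ⬝ᵥ ((Λseq j)ᴴ *
        ((A t (x + (j : ℝ) * α))ᴴ * Jmat d * matDerivT I A t (x + (j : ℝ) * α)) *
        Λseq j) *ᵥ u).re := by
    intro j u hu
    have hMNM := qform_helper (Λseq j)
      ((A t (x + (j : ℝ) * α))ᴴ * Jmat d * matDerivT I A t (x + (j : ℝ) * α)) u
    have hv : Λseq j *ᵥ u ≠ 0 := fun h => hu ((hfacts j).2 u h)
    have hiso : star (Λseq j *ᵥ u) ⬝ᵥ (Jmat d).mulVec (Λseq j *ᵥ u) = 0 := by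
      have := qform_helper (Λseq j) (Jmat d) u
      rw [(hfacts j).1] at this
      simp only [Matrix.zero_mulVec, dotProduct_zero] at this
      exact this.symm
    have := hmono t ht (x + (j : ℝ) * α) (Λseq j *ᵥ u) hv hiso
    rw [hMNM]
    exact this
  -- quadratic form of ℳ
  have hQ : ∀ u : Fin d → ℂ, star u ⬝ᵥ ℳ *ᵥ u =
      ∑ j ∈ Finset.range k, star u ⬝ᵥ ((Λseq j)ᴴ *
        ((A t (x + (j : ℝ) * α))ᴴ * Jmat d * matDerivT I A t (x + (j : ℝ) * α)) *
        Λseq j) *ᵥ u := by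
    intro u
    rw [hℳ, qform_sum]
  have him : ∀ u : Fin d → ℂ, (star u ⬝ᵥ ℳ *ᵥ u).im = 0 := by
    intro u
    by_cases hu : u = 0
    · subst hu; simp
    · rw [hQ, Complex.im_sum]
      exact Finset.sum_eq_zero fun j _ => (hterm j u hu).1
  have hherm : ℳ.IsHermitian := isHermitian_of_im_qform ℳ him
  have hpos : ∀ u : Fin d → ℂ, u ≠ 0 → 0 < star u ⬝ᵥ ℳ *ᵥ u := by
    intro u hu
    rw [Complex.lt_def]
    constructor
    · rw [Complex.zero_re, hQ, Complex.re_sum]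
      refine Finset.sum_pos (fun j _ => (hterm j u hu).2) ?_
      exact Finset.nonempty_range_iff.mpr (by omega)
    · rw [Complex.zero_im, him u]
  have hℳpd : ℳ.PosDef := Matrix.PosDef.of_dotProduct_mulVec_pos hherm hpos
  -- identify X, Y with the blocks of Λseq k
  have hXapp : ∀ (i j : Fin d), X i j = Λseq k (e (Sum.inl i)) j := by
    intro i j
    rw [hX]
    simp only [Matrix.of_apply]
    congr 1
  have hYapp : ∀ (i j : Fin d), Y i j = Λseq k (e (Sum.inr i)) j := by
    intro i j
    rw [hY]
    simp only [Matrix.of_apply]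
    congr 1
  -- kernel of X - iY is trivial
  have hker : ∀ u : Fin d → ℂ, (X - Complex.I • Y) *ᵥ u = 0 → u = 0 := by
    intro u hu0
    set a := X *ᵥ u with hadef
    set b := Y *ᵥ u with hbdef
    have ha : a = Complex.I • b := by
      have h1 : X *ᵥ u - (Complex.I • Y) *ᵥ u = 0 := by
        rw [← Matrix.sub_mulVec, hu0]
      rw [Matrix.smul_mulVec] at h1
      exact sub_eq_zero.mp h1
    set v := Λseq k *ᵥ u with hvdef
    have hva : ∀ i : Fin d, v (e (Sum.inl i)) = a i := by
      intro i
      simp only [hvdef, hadef, Matrix.mulVec, dotProduct]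
      exact Finset.sum_congr rfl fun j _ => by rw [hXapp i j]
    have hvb : ∀ i : Fin d, v (e (Sum.inr i)) = b i := by
      intro i
      simp only [hvdef, hbdef, Matrix.mulVec, dotProduct]
      exact Finset.sum_congr rfl fun j _ => by rw [hYapp i j]
    have hw : v = (Sum.elim a b) ∘ e.symm := by
      funext p
      obtain ⟨q, rfl⟩ : ∃ q, p = e q := ⟨e.symm p, (e.apply_symm_apply p).symm⟩
      cases q with
      | inl i => simp [hva i]
      | inr i => simp [hvb i]
    -- isotropy of v
    have hiso : star v ⬝ᵥ (Jmat d) *ᵥ v = 0 := by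
      have := qform_helper (Λseq k) (Jmat d) u
      rw [(hfacts k).1] at this
      simp only [Matrix.zero_mulVec, dotProduct_zero] at this
      exact this.symm
    -- compute the symplectic form in blocks
    have hcalc : star v ⬝ᵥ (Jmat d) *ᵥ v = star a ⬝ᵥ b - star b ⬝ᵥ a := by
      have hJv : (Jmat d) *ᵥ v = ((Matrix.fromBlocks 0 1 (-1) 0 :
          Matrix (Fin d ⊕ Fin d) (Fin d ⊕ Fin d) ℂ) *ᵥ (Sum.elim a b)) ∘ e.symm := by
        rw [Jmat, Matrix.reindex_apply, hw, Matrix.submatrix_mulVec_equiv]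
        have harg : ((Sum.elim a b) ∘ ⇑e.symm) ∘ ⇑e = Sum.elim a b := by
          funext p
          simp
        exact congrArg (fun w => ((Matrix.fromBlocks 0 1 (-1) 0 :
          Matrix (Fin d ⊕ Fin d) (Fin d ⊕ Fin d) ℂ) *ᵥ w) ∘ ⇑e.symm) harg
      rw [hJv, hw]
      have hsw : star ((Sum.elim a b) ∘ ⇑e.symm) =
          (Sum.elim (star a) (star b)) ∘ ⇑e.symm := by
        funext p
        rcases h : e.symm p with i | i <;> simp [h, Pi.star_apply]
      rw [hsw]
      have : ((Sum.elim (star a) (star b)) ∘ ⇑e.symm) ⬝ᵥ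
          (((Matrix.fromBlocks 0 1 (-1) 0 : Matrix (Fin d ⊕ Fin d) (Fin d ⊕ Fin d) ℂ)
            *ᵥ (Sum.elim a b)) ∘ ⇑e.symm) =
          Sum.elim (star a) (star b) ⬝ᵥ ((Matrix.fromBlocks 0 1 (-1) 0 :
            Matrix (Fin d ⊕ Fin d) (Fin d ⊕ Fin d) ℂ) *ᵥ (Sum.elim a b)) := by
        rw [dotProduct]
        exact Fintype.sum_equiv e.symm _ _ fun p => rfl
      rw [this, Matrix.fromBlocks_mulVec]
      simp only [Matrix.zero_mulVec, Matrix.one_mulVec, Matrix.neg_mulVec,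
        zero_add, add_zero, sumElim_dotProduct_sumElim,
        dotProduct_neg, Sum.elim_comp_inl, Sum.elim_comp_inr]
      ring
    rw [hcalc, ha] at hiso
    have hnb : star b ⬝ᵥ b = 0 := by
      have h2 : star (Complex.I • b) ⬝ᵥ b - star b ⬝ᵥ (Complex.I • b) = 0 := hiso
      rw [star_smul, smul_dotProduct, dotProduct_smul] at h2
      simp only [Complex.star_def, Complex.conj_I, smul_eq_mul, neg_mul] at h2
      have h3 : (-2 * Complex.I) * (star b ⬝ᵥ b) = 0 := by linear_combination h2
      rcases mul_eq_zero.mp h3 with h | h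
      · exact absurd h (mul_ne_zero (by norm_num) Complex.I_ne_zero)
      · exact h
    have hb0 : b = 0 := dotProduct_star_self_eq_zero.mp hnb
    have ha0 : a = 0 := by rw [ha, hb0, smul_zero]
    have hv0 : v = 0 := by
      rw [hw, hb0, ha0]
      funext p
      rcases h : e.symm p with i | i <;> simp [h]
    exact (hfacts k).2 u hv0
  have hC0 : IsUnit (X - Complex.I • Y) := by
    rw [← Matrix.mulVec_injective_iff_isUnit]
    intro u₁ u₂ h12
    have : (X - Complex.I • Y) *ᵥ (u₁ - u₂) = 0 := by
      rw [Matrix.mulVec_sub, h12, sub_self]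
    have := hker _ this
    exact sub_eq_zero.mp this
  -- the matrix N = (X - iY)⁻¹
  set N := (X - Complex.I • Y)⁻¹ with hN
  have hC0det : IsUnit (X - Complex.I • Y).det := (Matrix.isUnit_iff_isUnit_det _).mp hC0
  have hNker : ∀ u : Fin d → ℂ, u ≠ 0 → N *ᵥ u ≠ 0 := by
    intro u hu h0
    apply hu
    have h1 : (X - Complex.I • Y) *ᵥ (N *ᵥ u) = 0 := by rw [h0, Matrix.mulVec_zero]
    rwa [Matrix.mulVec_mulVec, Matrix.mul_nonsing_inv _ hC0det, Matrix.one_mulVec] at h1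
  have hmΩ : -Ω = (2 : ℂ) • (Nᴴ * ℳ * N) := by
    rw [hΩ, show ((-2 : ℂ)) = -(2 : ℂ) by norm_num, neg_smul, neg_neg]
  have hnegpd : (-Ω).PosDef := by
    refine Matrix.PosDef.of_dotProduct_mulVec_pos ?_ ?_
    · show (-Ω)ᴴ = -Ω
      rw [hmΩ, Matrix.conjTranspose_smul]
      simp only [Matrix.conjTranspose_mul, Matrix.conjTranspose_conjTranspose,
        hherm.eq, Matrix.mul_assoc]
      norm_num
    · intro u hu
      rw [hmΩ, Matrix.smul_mulVec, dotProduct_smul, smul_eq_mul,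
        qform_helper]
      refine mul_pos ?_ (hpos _ (hNker u hu))
      rw [Complex.lt_def]
      norm_num
  have htr : 0 < (-Ω).trace := by
    haveI : Nonempty (Fin d) := ⟨⟨0, by omega⟩⟩
    rw [Matrix.trace]
    refine Finset.sum_pos (fun i _ => ?_) Finset.univ_nonempty
    have hsne : ((Pi.single i 1 : Fin d → ℂ)) ≠ 0 := by
      intro h0
      have h1 : (Pi.single i 1 : Fin d → ℂ) i = 0 := by rw [h0]; rfl
      simp at h1
    have := hnegpd.dotProduct_mulVec_pos hsne
    rw [single_qform] at this
    simpa [Matrix.diag] using this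
  have htr' : 0 < -Ω.trace := by rwa [Matrix.trace_neg] at htr
  rw [Complex.lt_def] at htr'
  refine ⟨hℳpd, hC0, hnegpd, ?_, ?_⟩
  · have h := htr'.2
    simp only [Complex.zero_im, Complex.neg_im] at h
    linarith
  · have h := htr'.1
    simp only [Complex.zero_re, Complex.neg_re] at h
    linarith
end

section
/- Let A ∈ HSp(2d) and let Λ_t = (X_t; Y_t), t ∈ (a,b), be a C¹ family of Lagrangian frames (in d×d blocks) such that ℳ(t) = Λ_t* 𝒥_{2d} ∂_tΛ_t is positive definite (respectively negative definite) for each t. Write AΛ_t = (X_{A,t}; Y_{A,t}) in d×d blocks. Then: (AΛ_t)* 𝒥_{2d} ∂_t(AΛ_t) = ℳ(t); the matrices X_t − iY_t and X_{A,t} − iY_{A,t} are invertible; and the two real numbers tr(((X_t−iY_t)^{-1})* ℳ(t) (X_t−iY_t)^{-1}) and tr(((X_{A,t}−iY_{A,t})^{-1})* ℳ(t) (X_{A,t}−iY_{A,t})^{-1}) are both positive (respectively both negative). -/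
open scoped BigOperators Matrix ComplexOrder

/-- Entrywise derivative of a matrix-valued function of a real variable. -/
noncomputable def matDeriv {m n : ℕ} (Q : ℝ → Matrix (Fin m) (Fin n) ℂ) (t : ℝ) :
    Matrix (Fin m) (Fin n) ℂ :=
  Matrix.of fun i j => deriv (fun s => Q s i j) t

lemma sandwichJ (d : ℕ) (P Q : Matrix (Fin (2*d)) (Fin d) ℂ) :
    Pᴴ * Jmat d * Q =
      (P.submatrix (⇑(sumEquiv d)) id)ᴴ * (Matrix.fromBlocks 0 1 (-1) 0 : Matrix (Fin d ⊕ Fin d) (Fin d ⊕ Fin d) ℂ) *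
        (Q.submatrix (⇑(sumEquiv d)) id) := by
  have hP : Pᴴ = (P.submatrix (⇑(sumEquiv d)) id)ᴴ.submatrix id (⇑(sumEquiv d).symm) := by
    ext i j; simp [Matrix.conjTranspose_apply]
  have hQ : Q = (Q.submatrix (⇑(sumEquiv d)) id).submatrix (⇑(sumEquiv d).symm) id := by
    ext i j; simp
  conv_lhs => rw [hP, hQ]
  rw [Jmat, Matrix.reindex_apply, Matrix.submatrix_mul_equiv,
    Matrix.submatrix_mul_equiv, Matrix.submatrix_id_id]

lemma sandwich1 (d : ℕ) (P Q : Matrix (Fin (2*d)) (Fin d) ℂ) :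
    Pᴴ * Q =
      (P.submatrix (⇑(sumEquiv d)) id)ᴴ * (Q.submatrix (⇑(sumEquiv d)) id) := by
  have hP : (P.submatrix (⇑(sumEquiv d)) id)ᴴ = Pᴴ.submatrix id (⇑(sumEquiv d)) := by
    ext i j; simp [Matrix.conjTranspose_apply]
  rw [hP, Matrix.submatrix_mul_equiv, Matrix.submatrix_id_id]

lemma submatrix_eq_fromRows (d : ℕ) (P : Matrix (Fin (2*d)) (Fin d) ℂ)
    (X0 Y0 : Matrix (Fin d) (Fin d) ℂ)
    (hX0 : X0 = Matrix.of fun (i : Fin d) (j : Fin d) =>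
      P (Fin.cast (by omega) (Fin.castAdd d i)) j)
    (hY0 : Y0 = Matrix.of fun (i : Fin d) (j : Fin d) =>
      P (Fin.cast (by omega) (Fin.natAdd d i)) j) :
    P.submatrix (⇑(sumEquiv d)) id = Matrix.fromRows X0 Y0 := by
  ext p j
  cases p with
  | inl i => simp [hX0, sumEquiv, Matrix.fromRows_apply_inl, finCongr]
  | inr i => simp [hY0, sumEquiv, Matrix.fromRows_apply_inr, finCongr]

lemma lag_comm (d : ℕ) (P : Matrix (Fin (2*d)) (Fin d) ℂ)
    (X0 Y0 : Matrix (Fin d) (Fin d) ℂ)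
    (hX0 : X0 = Matrix.of fun (i : Fin d) (j : Fin d) =>
      P (Fin.cast (by omega) (Fin.castAdd d i)) j)
    (hY0 : Y0 = Matrix.of fun (i : Fin d) (j : Fin d) =>
      P (Fin.cast (by omega) (Fin.natAdd d i)) j)
    (hLag : Pᴴ * Jmat d * P = 0) :
    X0ᴴ * Y0 = Y0ᴴ * X0 := by
  have h := sandwichJ d P P
  rw [hLag, submatrix_eq_fromRows d P X0 Y0 hX0 hY0,
    Matrix.conjTranspose_fromRows_eq_fromCols_conjTranspose,
    Matrix.fromCols_mul_fromBlocks, Matrix.fromCols_mul_fromRows] at h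
  have h := h.symm
  simp only [Matrix.mul_zero, Matrix.mul_one, Matrix.mul_neg, Matrix.neg_mul,
    zero_add, add_zero, neg_add_eq_zero] at h
  exact h.symm

lemma gram_eq (d : ℕ) (P : Matrix (Fin (2*d)) (Fin d) ℂ)
    (X0 Y0 : Matrix (Fin d) (Fin d) ℂ)
    (hX0 : X0 = Matrix.of fun (i : Fin d) (j : Fin d) =>
      P (Fin.cast (by omega) (Fin.castAdd d i)) j)
    (hY0 : Y0 = Matrix.of fun (i : Fin d) (j : Fin d) =>
      P (Fin.cast (by omega) (Fin.natAdd d i)) j) :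
    Pᴴ * P = X0ᴴ * X0 + Y0ᴴ * Y0 := by
  rw [sandwich1 d P P, submatrix_eq_fromRows d P X0 Y0 hX0 hY0,
    Matrix.conjTranspose_fromRows_eq_fromCols_conjTranspose,
    Matrix.fromCols_mul_fromRows]

lemma mulVec_eq_zero_of_rank (d m : ℕ) (P : Matrix (Fin m) (Fin d) ℂ)
    (hrank : P.rank = d) (v : Fin d → ℂ) (hv : P *ᵥ v = 0) : v = 0 := by
  have hker : LinearMap.ker P.mulVecLin = ⊥ := by
    have h1 : Module.finrank ℂ (LinearMap.range P.mulVecLin)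
        + Module.finrank ℂ (LinearMap.ker P.mulVecLin)
        = Module.finrank ℂ (Fin d → ℂ) := LinearMap.finrank_range_add_finrank_ker _
    have h2 : Module.finrank ℂ (Fin d → ℂ) = d := by simp
    have h3 : Module.finrank ℂ (LinearMap.range P.mulVecLin) = d := hrank
    have h4 : Module.finrank ℂ (LinearMap.ker P.mulVecLin) = 0 := by omega
    exact Submodule.finrank_eq_zero.mp h4
  have : v ∈ LinearMap.ker P.mulVecLin := by simpa [Matrix.mulVecLin_apply] using hv
  simpa [hker] using this

lemma cayley_isUnit (d : ℕ) (P : Matrix (Fin (2*d)) (Fin d) ℂ)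
    (hinj : ∀ v, P *ᵥ v = 0 → v = 0)
    (hLag : Pᴴ * Jmat d * P = 0)
    (X0 Y0 : Matrix (Fin d) (Fin d) ℂ)
    (hX0 : X0 = Matrix.of fun (i : Fin d) (j : Fin d) =>
      P (Fin.cast (by omega) (Fin.castAdd d i)) j)
    (hY0 : Y0 = Matrix.of fun (i : Fin d) (j : Fin d) =>
      P (Fin.cast (by omega) (Fin.natAdd d i)) j) :
    IsUnit (X0 - Complex.I • Y0) := by
  set C := X0 - Complex.I • Y0 with hC
  have hcomm := lag_comm d P X0 Y0 hX0 hY0 hLag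
  have hexp : Cᴴ * C = Pᴴ * P := by
    rw [gram_eq d P X0 Y0 hX0 hY0, hC]
    simp only [Matrix.conjTranspose_sub, Matrix.conjTranspose_smul, Matrix.sub_mul,
      Matrix.mul_sub, Matrix.smul_mul, Matrix.mul_smul, smul_smul,
      Complex.star_def, Complex.conj_I]
    rw [hcomm]
    match_scalars <;> simp [Complex.ext_iff]
  rw [← Matrix.mulVec_injective_iff_isUnit]
  intro u v huv
  have h0 : C *ᵥ (u - v) = 0 := by
    rw [Matrix.mulVec_sub, huv, sub_self]
  have h1 : P *ᵥ (u - v) = 0 := by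
    have h2 : star (u - v) ⬝ᵥ ((Pᴴ * P) *ᵥ (u - v)) = 0 := by
      rw [← hexp, ← Matrix.mulVec_mulVec, h0, Matrix.mulVec_zero, dotProduct_zero]
    rw [← Matrix.mulVec_mulVec, Matrix.dotProduct_mulVec, ← Matrix.star_mulVec] at h2
    exact dotProduct_star_self_eq_zero.mp h2
  exact sub_eq_zero.mp (hinj _ h1)

lemma posdef_congr {d : ℕ} {M : Matrix (Fin d) (Fin d) ℂ} (hM : M.PosDef)
    (C : Matrix (Fin d) (Fin d) ℂ) (hC : IsUnit C) : (Cᴴ * M * C).PosDef := by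
  refine ⟨?_, fun x hx => ?_⟩
  · have := hM.isHermitian
    unfold Matrix.IsHermitian at *
    rw [Matrix.conjTranspose_mul, Matrix.conjTranspose_mul, Matrix.conjTranspose_conjTranspose,
      this, Matrix.mul_assoc]
  · exact (hM.conjTranspose_mul_mul_same (Matrix.mulVec_injective_iff_isUnit.mpr hC)).2 hx

lemma posdef_trace {d : ℕ} (hd : 1 ≤ d) {M : Matrix (Fin d) (Fin d) ℂ} (hM : M.PosDef) :
    0 < M.trace.re ∧ M.trace.im = 0 := by
  have hdiag : ∀ i, 0 < M i i := by
    intro i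
    exact hM.diag_pos
  have : Nonempty (Fin d) := ⟨⟨0, hd⟩⟩
  have htr : 0 < M.trace := by
    rw [Matrix.trace]
    exact Finset.sum_pos (fun i _ => hdiag i) Finset.univ_nonempty
  rw [Complex.lt_def] at htr
  simpa using ⟨htr.1, htr.2.symm⟩

lemma Jmat_conjTranspose_mul (d : ℕ) : (Jmat d)ᴴ * Jmat d = 1 := by
  rw [Jmat, Matrix.reindex_apply, Matrix.conjTranspose_submatrix,
    Matrix.submatrix_mul_equiv]
  have : (Matrix.fromBlocks (0:Matrix (Fin d) (Fin d) ℂ) (1:Matrix (Fin d) (Fin d) ℂ) (-1) 0)ᴴ *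
      Matrix.fromBlocks (0:Matrix (Fin d) (Fin d) ℂ) (1:Matrix (Fin d) (Fin d) ℂ) (-1) 0
      = (1 : Matrix (Fin d ⊕ Fin d) (Fin d ⊕ Fin d) ℂ) := by
    simp [Matrix.fromBlocks_conjTranspose, Matrix.fromBlocks_multiply,
      ← Matrix.fromBlocks_one]
  rw [this, Matrix.submatrix_one_equiv]

lemma isUnit_det_Jmat (d : ℕ) : IsUnit (Jmat d).det := by
  have h := congrArg Matrix.det (Jmat_conjTranspose_mul d)
  rw [Matrix.det_mul, Matrix.det_one] at h
  rw [mul_comm] at h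
  exact IsUnit.of_mul_eq_one _ h

lemma isUnit_A {d : ℕ} {A : Matrix (Fin (2*d)) (Fin (2*d)) ℂ}
    (hA : Aᴴ * Jmat d * A = Jmat d) : IsUnit A := by
  rw [Matrix.isUnit_iff_isUnit_det]
  have h := congrArg Matrix.det hA
  rw [Matrix.det_mul, Matrix.det_mul] at h
  have hne := (isUnit_det_Jmat d).ne_zero
  have h2 : (A.det * Aᴴ.det) * (Jmat d).det = 1 * (Jmat d).det := by linear_combination h
  exact IsUnit.of_mul_eq_one _ (mul_right_cancel₀ hne h2)

lemma matDeriv_const_mul {m n : ℕ} (A : Matrix (Fin m) (Fin m) ℂ)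
    (Λ : ℝ → Matrix (Fin m) (Fin n) ℂ) (t : ℝ)
    (hdiff : ∀ i j, DifferentiableAt ℝ (fun s => Λ s i j) t) :
    matDeriv (fun s => A * Λ s) t = A * matDeriv Λ t := by
  ext i j
  have h1 : (fun s => (A * Λ s) i j) = fun s => ∑ k, A i k * Λ s k j := by
    funext s; rw [Matrix.mul_apply]
  rw [matDeriv, Matrix.of_apply, h1, deriv_fun_sum (fun k _ => ((hdiff k j).const_mul _))]
  rw [Matrix.mul_apply]
  congr 1
  funext k
  rw [deriv_const_mul _ (hdiff k j)]
  rfl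

/-- Invariance of monotonicity of Lagrangian paths under the Hermitian-symplectic
group: if `A ∈ HSp(2d)` and `Λ_t` is a `C¹` family of Lagrangian frames with
`ℳ(t) = Λ_t* 𝒥 ∂_tΛ_t` definite, then `(AΛ_t)* 𝒥 ∂_t(AΛ_t) = ℳ(t)`, the Cayley
denominators of `Λ_t` and `AΛ_t` are invertible, and the traces of the compressed
forms have the same (strict) sign as `ℳ(t)`. -/
theorem hermitian_symplectic_preserves_monotone_lagrangian
    (d : ℕ) (hd : 1 ≤ d)
    (a b : ℝ) (hab : a < b)
    (A : Matrix (Fin (2 * d)) (Fin (2 * d)) ℂ)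
    (hA : Aᴴ * Jmat d * A = Jmat d)
    (Λ : ℝ → Matrix (Fin (2 * d)) (Fin d) ℂ)
    (hC1 : ∀ (i : Fin (2 * d)) (j : Fin d),
      ContDiffOn ℝ 1 (fun t => Λ t i j) (Set.Ioo a b))
    (hrank : ∀ t ∈ Set.Ioo a b, (Λ t).rank = d)
    (hLag : ∀ t ∈ Set.Ioo a b, (Λ t)ᴴ * Jmat d * Λ t = 0)
    (ℳ : ℝ → Matrix (Fin d) (Fin d) ℂ)
    (hℳ : ∀ t : ℝ, ℳ t = (Λ t)ᴴ * Jmat d * matDeriv Λ t)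
    (hdef : (∀ t ∈ Set.Ioo a b, (ℳ t).PosDef) ∨ (∀ t ∈ Set.Ioo a b, (-(ℳ t)).PosDef))
    (X Y XA YA : ℝ → Matrix (Fin d) (Fin d) ℂ)
    (hX : ∀ t, X t = Matrix.of fun (i : Fin d) (j : Fin d) =>
      Λ t (Fin.cast (by omega) (Fin.castAdd d i)) j)
    (hY : ∀ t, Y t = Matrix.of fun (i : Fin d) (j : Fin d) =>
      Λ t (Fin.cast (by omega) (Fin.natAdd d i)) j)
    (hXA : ∀ t, XA t = Matrix.of fun (i : Fin d) (j : Fin d) =>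
      (A * Λ t) (Fin.cast (by omega) (Fin.castAdd d i)) j)
    (hYA : ∀ t, YA t = Matrix.of fun (i : Fin d) (j : Fin d) =>
      (A * Λ t) (Fin.cast (by omega) (Fin.natAdd d i)) j) :
    ∀ t ∈ Set.Ioo a b,
      (A * Λ t)ᴴ * Jmat d * matDeriv (fun s => A * Λ s) t = ℳ t ∧
      IsUnit (X t - Complex.I • Y t) ∧
      IsUnit (XA t - Complex.I • YA t) ∧
      ((∀ s ∈ Set.Ioo a b, (ℳ s).PosDef) →
        0 < ((((X t - Complex.I • Y t)⁻¹)ᴴ * ℳ t *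
              (X t - Complex.I • Y t)⁻¹).trace).re ∧
        ((((X t - Complex.I • Y t)⁻¹)ᴴ * ℳ t *
              (X t - Complex.I • Y t)⁻¹).trace).im = 0 ∧
        0 < ((((XA t - Complex.I • YA t)⁻¹)ᴴ * ℳ t *
              (XA t - Complex.I • YA t)⁻¹).trace).re ∧
        ((((XA t - Complex.I • YA t)⁻¹)ᴴ * ℳ t *
              (XA t - Complex.I • YA t)⁻¹).trace).im = 0) ∧
      ((∀ s ∈ Set.Ioo a b, (-(ℳ s)).PosDef) →
        ((((X t - Complex.I • Y t)⁻¹)ᴴ * ℳ t *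
              (X t - Complex.I • Y t)⁻¹).trace).re < 0 ∧
        ((((X t - Complex.I • Y t)⁻¹)ᴴ * ℳ t *
              (X t - Complex.I • Y t)⁻¹).trace).im = 0 ∧
        ((((XA t - Complex.I • YA t)⁻¹)ᴴ * ℳ t *
              (XA t - Complex.I • YA t)⁻¹).trace).re < 0 ∧
        ((((XA t - Complex.I • YA t)⁻¹)ᴴ * ℳ t *
              (XA t - Complex.I • YA t)⁻¹).trace).im = 0) := by
  intro t ht
  have hdiff : ∀ i j, DifferentiableAt ℝ (fun s => Λ s i j) t := fun i j =>
    ((hC1 i j).differentiableOn one_ne_zero).differentiableAt (isOpen_Ioo.mem_nhds ht)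
  have hmd : matDeriv (fun s => A * Λ s) t = A * matDeriv Λ t :=
    matDeriv_const_mul A Λ t hdiff
  have part1 : (A * Λ t)ᴴ * Jmat d * matDeriv (fun s => A * Λ s) t = ℳ t := by
    rw [hmd, Matrix.conjTranspose_mul, hℳ t]
    have e1 : (Λ t)ᴴ * Aᴴ * Jmat d * (A * matDeriv Λ t)
        = (Λ t)ᴴ * (Aᴴ * Jmat d * A) * matDeriv Λ t := by
      simp only [Matrix.mul_assoc]
    rw [e1, hA]
  have hALag : (A * Λ t)ᴴ * Jmat d * (A * Λ t) = 0 := by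
    rw [Matrix.conjTranspose_mul]
    have e1 : (Λ t)ᴴ * Aᴴ * Jmat d * (A * Λ t)
        = (Λ t)ᴴ * (Aᴴ * Jmat d * A) * Λ t := by
      simp only [Matrix.mul_assoc]
    rw [e1, hA]
    exact hLag t ht
  have hinjΛ : ∀ v, Λ t *ᵥ v = 0 → v = 0 :=
    mulVec_eq_zero_of_rank d (2*d) (Λ t) (hrank t ht)
  have hinjA := Matrix.mulVec_injective_iff_isUnit.mpr (isUnit_A hA)
  have hinjAΛ : ∀ v, (A * Λ t) *ᵥ v = 0 → v = 0 := by
    intro v hv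
    rw [← Matrix.mulVec_mulVec] at hv
    exact hinjΛ v (hinjA (by simpa using hv))
  have hu1 : IsUnit (X t - Complex.I • Y t) :=
    cayley_isUnit d (Λ t) hinjΛ (hLag t ht) (X t) (Y t) (hX t) (hY t)
  have hu2 : IsUnit (XA t - Complex.I • YA t) :=
    cayley_isUnit d (A * Λ t) hinjAΛ hALag (XA t) (YA t) (hXA t) (hYA t)
  have hu1' : IsUnit (X t - Complex.I • Y t)⁻¹ := Matrix.isUnit_nonsing_inv_iff.mpr hu1
  have hu2' : IsUnit (XA t - Complex.I • YA t)⁻¹ := Matrix.isUnit_nonsing_inv_iff.mpr hu2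
  refine ⟨part1, hu1, hu2, ?_, ?_⟩
  · intro hpos
    have hMt := hpos t ht
    have t1 := posdef_trace hd (posdef_congr hMt _ hu1')
    have t2 := posdef_trace hd (posdef_congr hMt _ hu2')
    exact ⟨t1.1, t1.2, t2.1, t2.2⟩
  · intro hneg
    have hMt := hneg t ht
    have key : ∀ C : Matrix (Fin d) (Fin d) ℂ, IsUnit C →
        ((Cᴴ * ℳ t * C).trace).re < 0 ∧ ((Cᴴ * ℳ t * C).trace).im = 0 := by
      intro C hC
      have t1 := posdef_trace hd (posdef_congr hMt C hC)
      have e : Cᴴ * -ℳ t * C = -(Cᴴ * ℳ t * C) := by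
        simp [Matrix.mul_neg, Matrix.neg_mul]
      rw [e, Matrix.trace_neg] at t1
      constructor
      · have := t1.1; simp only [Complex.neg_re] at this; linarith
      · have := t1.2; simp only [Complex.neg_im] at this; linarith
    exact ⟨(key _ hu1').1, (key _ hu1').2, (key _ hu2').1, (key _ hu2').2⟩
end
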